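/- arXiv:math/0502107 — 4 statements merged into one kernel-verified Lean document; each statement's English description precedes it below -/
import Mathlib

section
/- Let λ be a partition, let c be the coatom of row i of P_λ, and let x ∈ P_λ. Then x ≤ c in P_λ if and only if, when the sets {x_1, …, x_i} and {c_1, …, c_i} are each listed in increasing order, the list for x is componentwise ≤ the list for c (i.e. it suffices to check the defining dominance condition only at index j = i). -/
namespace RookPoset

/-- A partition with `n` parts: `part i` is the (1-based) part `λ_{i+1}`.
The parts are weakly increasing and contain the staircase (`λ_i ≥ i`, 1-based),
which in particular makes them positive. -/
structure Partition (n : ℕ) where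
  part : Fin n → ℕ
  mono : Monotone part
  staircase : ∀ i : Fin n, (i : ℕ) + 1 ≤ part i

/-- The largest part; equals `λ_n` when `n > 0`. -/
def Partition.maxPart {n : ℕ} (lam : Partition n) : ℕ :=
  Finset.univ.sup lam.part

/-- The part `λ_k` in 1-based indexing, with the convention `λ_m = n + 1` for `m > n`. -/
def Partition.partAt {n : ℕ} (lam : Partition n) (k : ℕ) : ℕ :=
  if h : 1 ≤ k ∧ k ≤ n then lam.part ⟨k - 1, by omega⟩ else n + 1

/-- The GJW sequence `(λ_1 - 1, λ_2 - 2, …, λ_n - n)` of a partition. -/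
def Partition.gjw {n : ℕ} (lam : Partition n) : List ℕ :=
  (List.finRange n).map fun i => lam.part i - ((i : ℕ) + 1)

/-- A maximal rook placement on the Ferrers board of `lam`: `col i` is the (1-based)
column of the rook in the (1-based) row `i + 1` (rows indexed bottom-up). -/
structure Placement {n : ℕ} (lam : Partition n) where
  col : Fin n → ℕ
  inj : Function.Injective col
  pos : ∀ i, 1 ≤ col i
  le_part : ∀ i, col i ≤ lam.part i

/-- The increasingly sorted list of the values `x i` over indices `i` with `(i : ℕ) < j`,
i.e. the sorted initial segment `{x_1, …, x_j}` (1-based). -/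
def initSeg {n : ℕ} (x : Fin n → ℕ) (j : ℕ) : List ℕ :=
  ((Finset.univ.filter fun i : Fin n => (i : ℕ) < j).image x).sort (· ≤ ·)

/-- The rook poset order: `x ≤ y` iff each sorted initial segment of `x` is
componentwise at most the corresponding sorted initial segment of `y`. -/
def rle {n : ℕ} {lam : Partition n} (x y : Placement lam) : Prop :=
  ∀ j : ℕ, List.Forall₂ (· ≤ ·) (initSeg x.col j) (initSeg y.col j)

/-- `y` covers `x` in the rook poset. -/
def rcovers {n : ℕ} {lam : Partition n} (x y : Placement lam) : Prop :=
  rle x y ∧ x ≠ y ∧ ∀ z : Placement lam, rle x z → rle z y → z = x ∨ z = y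

/-- `y` covers `x` in the subposet induced on `S`. -/
def rcoversIn {n : ℕ} {lam : Partition n} (S : Set (Placement lam)) (x y : Placement lam) :
    Prop :=
  x ∈ S ∧ y ∈ S ∧ rle x y ∧ x ≠ y ∧ ∀ z ∈ S, rle x z → rle z y → z = x ∨ z = y

/-- `t` is the greedy placement `1̂`: for each row in turn (bottom-up), the rook is placed
in the largest column `≤ λ_i` not used by a lower row. -/
def IsGreedy {n : ℕ} {lam : Partition n} (t : Placement lam) : Prop :=
  ∀ i : Fin n, ∀ m : ℕ, 1 ≤ m → m ≤ lam.part i →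
    (∀ k : Fin n, k < i → t.col k ≠ m) → m ≤ t.col i

/-- `x` is obtained from `y` by the switch move on the rooks in rows `i < k`:
the rectangle spanned by the rooks at `(i, y.col i)` and `(k, y.col k)` contains no other rook,
and the two rooks exchange columns. -/
def SwitchMove {n : ℕ} {lam : Partition n} (y x : Placement lam) (i k : Fin n) : Prop :=
  i < k ∧ y.col k < y.col i ∧
  (∀ r : Fin n, i ≤ r → r ≤ k → y.col k ≤ y.col r → y.col r ≤ y.col i → r = i ∨ r = k) ∧
  x.col i = y.col k ∧ x.col k = y.col i ∧
  ∀ r : Fin n, r ≠ i → r ≠ k → x.col r = y.col r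

/-- `x` is obtained from `y` by a push move on the rook in row `i`: the rook moves to an
empty column `c` to its left such that every column strictly between `c` and its old column
contains a rook in a row below row `i`. -/
def PushMove {n : ℕ} {lam : Partition n} (y x : Placement lam) (i : Fin n) : Prop :=
  ∃ c : ℕ, 1 ≤ c ∧ c < y.col i ∧ (∀ r : Fin n, y.col r ≠ c) ∧
    (∀ d : ℕ, c < d → d < y.col i → ∃ r : Fin n, r < i ∧ y.col r = d) ∧
    x.col i = c ∧ ∀ r : Fin n, r ≠ i → x.col r = y.col r

/-- `x` is obtained from `y` by a single switch or push move on the rook in row `i`. -/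
def MoveOnRow {n : ℕ} {lam : Partition n} (y x : Placement lam) (i : Fin n) : Prop :=
  (∃ k : Fin n, SwitchMove y x i k) ∨ PushMove y x i

/-- Two coatoms `c, c'` of the rook poset (with top element `t`) are entangled:
there are two distinct elements each of which is covered by both `c` and `c'`
and lies below no other coatom. -/
def Entangled {n : ℕ} {lam : Partition n} (t c c' : Placement lam) : Prop :=
  ∃ z₁ z₂ : Placement lam, z₁ ≠ z₂ ∧
    (rcovers z₁ c ∧ rcovers z₁ c' ∧
      ∀ d : Placement lam, rcovers d t → d ≠ c → d ≠ c' → ¬ rle z₁ d) ∧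
    (rcovers z₂ c ∧ rcovers z₂ c' ∧
      ∀ d : Placement lam, rcovers d t → d ≠ c → d ≠ c' → ¬ rle z₂ d)

/-- `X_I`: the set of elements of the rook poset lying below no coatom outside `I`. -/
def Xset {n : ℕ} {lam : Partition n} (t : Placement lam) (I : Set (Placement lam)) :
    Set (Placement lam) :=
  {z : Placement lam | ∀ c' : Placement lam, rcovers c' t → c' ∉ I → ¬ rle z c'}

/-- The completed permutation `σ_x` of `{1, …, λ_n}` (as a function on 1-based positions):
position `i ≤ n` holds `x_i`, and the remaining positions hold the unused values in
increasing order (i.e. each subsequent position receives the smallest value not yet used). -/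
def Placement.sigma {n : ℕ} {lam : Partition n} (x : Placement lam) : ℕ → ℕ := fun a =>
  if h : 1 ≤ a ∧ a ≤ n then x.col ⟨a - 1, by omega⟩
  else ((Finset.Icc 1 lam.maxPart \ Finset.univ.image x.col).sort (· ≤ ·)).getD (a - n - 1) 0

/-- The rank `r(x)`: the number of inversions of the completed permutation `σ_x`. -/
def Placement.rank {n : ℕ} {lam : Partition n} (x : Placement lam) : ℕ :=
  ((Finset.Icc 1 lam.maxPart ×ˢ Finset.Icc 1 lam.maxPart).filter
    fun p => p.1 < p.2 ∧ x.sigma p.2 < x.sigma p.1).card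

/-- Break a list after every entry equal to `1`. -/
def breakAfterOnes : List ℕ → List (List ℕ)
  | [] => []
  | a :: rest =>
    if a = 1 then [a] :: breakAfterOnes rest
    else
      match breakAfterOnes rest with
      | [] => [[a]]
      | b :: bs => (a :: b) :: bs

/-- The multiset of blocks of a partition: break the GJW sequence after every entry
equal to `1` and delete all entries equal to `0` (discarding empty blocks). -/
def Partition.blocks {n : ℕ} (lam : Partition n) : Multiset (List ℕ) :=
  (((breakAfterOnes lam.gjw).map fun b => b.filter (· ≠ 0)).filter
    (· ≠ ([] : List ℕ)) : List (List ℕ))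

/-- The conjugate of a block `b = (g_1, …, g_k)` ending in `1`: it is the GJW sequence of the
conjugate partition `ν'` of the partition `ν` with `ν_i = g_i + i`, where
`ν'_i = k + 2 - min {m | ν_m ≥ k + 2 - i}` with the convention `ν_{k+1} = k + 1`. -/
noncomputable def conjBlock (b : List ℕ) : List ℕ :=
  let k := b.length
  let nu : ℕ → ℕ := fun m => if m ≤ k then b.getD (m - 1) 0 + m else k + 1
  (List.range k).map fun i0 =>
    let i := i0 + 1
    (k + 2 - sInf {m : ℕ | 1 ≤ m ∧ k + 2 - i ≤ nu m}) - i

/-- A block ends in `1`. -/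
def endsInOne (b : List ℕ) : Prop := b.getLast? = some 1

/-- Two blocks are equivalent when they are equal, or one ends in `1` and the other is its
conjugate block. -/
def BlockEquiv (b b' : List ℕ) : Prop :=
  b = b' ∨ (endsInOne b ∧ b' = conjBlock b) ∨ (endsInOne b' ∧ b = conjBlock b')

/-- Two partitions have matching block data: their multisets of blocks become equal after
replacing some blocks ending in `1` by their conjugate blocks. -/
def MatchingBlocks {n m : ℕ} (lam : Partition n) (mu : Partition m) : Prop :=
  Multiset.Rel BlockEquiv lam.blocks mu.blocks

/-- The rook posets of `lam` and `mu` are isomorphic as partially ordered sets. -/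
def RookIso {n m : ℕ} (lam : Partition n) (mu : Partition m) : Prop :=
  ∃ e : Placement lam ≃ Placement mu, ∀ a b : Placement lam, rle a b ↔ rle (e a) (e b)

/-- A function `τ`, viewed as a permutation of `{1, …, N}`, is `312`-avoiding. -/
def Avoids312 (N : ℕ) (τ : ℕ → ℕ) : Prop :=
  ∀ a b c : ℕ, 1 ≤ a → a < b → b < c → c ≤ N → ¬ (τ b < τ c ∧ τ c < τ a)

/-- A permutation of `Fin N` is `312`-avoiding. -/
def Avoids312P {N : ℕ} (τ : Equiv.Perm (Fin N)) : Prop :=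
  ∀ a b c : Fin N, a < b → b < c → ¬ (τ b < τ c ∧ τ c < τ a)

/-- The Bruhat order on permutations, characterized by componentwise dominance of the
increasingly sorted initial segments. -/
def bruhatLE {N : ℕ} (σ τ : Equiv.Perm (Fin N)) : Prop :=
  ∀ j : ℕ, List.Forall₂ (· ≤ ·)
    (initSeg (fun a : Fin N => (σ a : ℕ)) j) (initSeg (fun a : Fin N => (τ a : ℕ)) j)


/-! ### Auxiliary machinery for Statement 9 -/

/-- The number of rows `r < j` whose rook column is at least `m`. -/
def cntGe {n : ℕ} (x : Fin n → ℕ) (j m : ℕ) : ℕ :=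
  (Finset.univ.filter fun r : Fin n => (r : ℕ) < j ∧ m ≤ x r).card

lemma cntGe_mono {n : ℕ} (x : Fin n → ℕ) (m : ℕ) {j j' : ℕ} (h : j ≤ j') :
    cntGe x j m ≤ cntGe x j' m := by
  apply Finset.card_le_card
  intro r hr
  simp only [Finset.mem_filter, Finset.mem_univ, true_and] at *
  exact ⟨lt_of_lt_of_le hr.1 h, hr.2⟩

lemma cntGe_congr {n : ℕ} (x y : Fin n → ℕ) (j m : ℕ)
    (h : ∀ r : Fin n, (r : ℕ) < j → (m ≤ x r ↔ m ≤ y r)) :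
    cntGe x j m = cntGe y j m := by
  unfold cntGe
  congr 1
  apply Finset.filter_congr
  intro r _
  exact and_congr_right (h r)

lemma cntGe_split {n : ℕ} (x : Fin n → ℕ) (m j₁ j₂ : ℕ) (h : j₁ ≤ j₂) :
    cntGe x j₂ m = cntGe x j₁ m +
      (Finset.univ.filter fun r : Fin n => j₁ ≤ (r : ℕ) ∧ (r : ℕ) < j₂ ∧ m ≤ x r).card := by
  classical
  rw [cntGe, cntGe, ← Finset.card_union_of_disjoint ?_, ← Finset.filter_or]
  · congr 1
    apply Finset.filter_congr
    intro r _
    omega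
  · rw [Finset.disjoint_left]
    intro r hr1 hr2
    simp only [Finset.mem_filter, Finset.mem_univ, true_and] at hr1 hr2
    omega

lemma cntGe_succ {n : ℕ} (x : Fin n → ℕ) (m j : ℕ) (hj : j < n) :
    cntGe x (j + 1) m = cntGe x j m + if m ≤ x ⟨j, hj⟩ then 1 else 0 := by
  classical
  rw [cntGe_split x m j (j + 1) (Nat.le_succ j)]
  congr 1
  have hset : (Finset.univ.filter fun r : Fin n => j ≤ (r : ℕ) ∧ (r : ℕ) < j + 1 ∧ m ≤ x r)
      = if m ≤ x ⟨j, hj⟩ then {(⟨j, hj⟩ : Fin n)} else ∅ := by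
    split_ifs with h
    · ext r
      simp only [Finset.mem_filter, Finset.mem_univ, true_and, Finset.mem_singleton]
      constructor
      · intro hr
        exact Fin.ext (show (r : ℕ) = j by omega)
      · rintro rfl
        exact ⟨le_refl _, Nat.lt_succ_self _, h⟩
    · ext r
      simp only [Finset.mem_filter, Finset.mem_univ, true_and, Finset.notMem_empty, iff_false]
      intro hr
      have hre : r = (⟨j, hj⟩ : Fin n) := Fin.ext (show (r : ℕ) = j by omega)
      exact h (hre ▸ hr.2.2)
  rw [hset]
  split_ifs <;> simp

lemma cntGe_succ_ge {n : ℕ} (x : Fin n → ℕ) (m j : ℕ) (hj : n ≤ j) :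
    cntGe x (j + 1) m = cntGe x j m := by
  unfold cntGe
  congr 1
  apply Finset.filter_congr
  intro r _
  have hr := r.isLt
  omega

/-- The greedy placement is the maximum of the rook poset, in counting form. -/
lemma greedy_max {n : ℕ} {lam : Partition n} (t : Placement lam) (ht : IsGreedy t)
    (x : Placement lam) : ∀ j m, cntGe x.col j m ≤ cntGe t.col j m := by
  intro j
  induction j with
  | zero =>
    intro m
    simp [cntGe]
  | succ j ih =>
    intro m
    by_cases hj : j < n
    · by_cases hx : m ≤ x.col ⟨j, hj⟩
      · by_cases htj : m ≤ t.col ⟨j, hj⟩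
        · rw [cntGe_succ _ _ _ hj, cntGe_succ _ _ _ hj, if_pos hx, if_pos htj]
          exact Nat.add_le_add_right (ih m) 1
        · -- hard case: use greediness
          have htjm : t.col ⟨j, hj⟩ < m := by omega
          have hm1 : 1 ≤ m := by
            have := t.pos ⟨j, hj⟩
            omega
          have hall : ∀ v, m ≤ v → v ≤ lam.part ⟨j, hj⟩ →
              ∃ k : Fin n, k < (⟨j, hj⟩ : Fin n) ∧ t.col k = v := by
            intro v hv1 hv2
            by_contra hcon
            push_neg at hcon
            have hge := ht ⟨j, hj⟩ v (le_trans hm1 hv1) hv2 (fun k hk => hcon k hk)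
            omega
          have h1 : (Finset.Icc m (lam.part ⟨j, hj⟩)).card ≤ cntGe t.col j m := by
            have hsub : Finset.Icc m (lam.part ⟨j, hj⟩) ⊆
                (Finset.univ.filter fun r : Fin n => (r : ℕ) < j ∧ m ≤ t.col r).image t.col := by
              intro v hv
              simp only [Finset.mem_Icc] at hv
              obtain ⟨k, hk1, hk2⟩ := hall v hv.1 hv.2
              apply Finset.mem_image.mpr
              refine ⟨k, ?_, hk2⟩
              simp only [Finset.mem_filter, Finset.mem_univ, true_and]
              exact ⟨hk1, by omega⟩
            calc (Finset.Icc m (lam.part ⟨j, hj⟩)).card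
                ≤ ((Finset.univ.filter fun r : Fin n =>
                    (r : ℕ) < j ∧ m ≤ t.col r).image t.col).card := Finset.card_le_card hsub
              _ ≤ cntGe t.col j m := Finset.card_image_le
          have h2 : cntGe x.col (j + 1) m ≤ (Finset.Icc m (lam.part ⟨j, hj⟩)).card := by
            rw [cntGe, ← Finset.card_image_of_injective _ x.inj]
            apply Finset.card_le_card
            intro v hv
            obtain ⟨r, hr, hrv⟩ := Finset.mem_image.mp hv
            simp only [Finset.mem_filter, Finset.mem_univ, true_and] at hr
            simp only [Finset.mem_Icc]
            refine ⟨hrv ▸ hr.2, ?_⟩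
            calc v = x.col r := hrv.symm
              _ ≤ lam.part r := x.le_part r
              _ ≤ lam.part ⟨j, hj⟩ := lam.mono (by
                  rw [Fin.le_def]
                  simp only
                  omega)
          calc cntGe x.col (j + 1) m ≤ (Finset.Icc m (lam.part ⟨j, hj⟩)).card := h2
            _ ≤ cntGe t.col j m := h1
            _ ≤ cntGe t.col (j + 1) m := cntGe_mono _ _ (Nat.le_succ j)
      · rw [cntGe_succ _ _ _ hj, cntGe_succ _ _ _ hj, if_neg hx]
        have := ih m
        split_ifs <;> omega
    · rw [cntGe_succ_ge _ _ _ (le_of_not_gt hj), cntGe_succ_ge _ _ _ (le_of_not_gt hj)]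
      exact ih m

/-- Componentwise dominance of equal-length sorted lists is equivalent to
dominance of the counts of entries `≥ m`, for every threshold `m`. -/
lemma sorted_forall2_iff : ∀ (l1 l2 : List ℕ), l1.Pairwise (· ≤ ·) → l2.Pairwise (· ≤ ·) →
    l1.length = l2.length →
    (List.Forall₂ (· ≤ ·) l1 l2 ↔
      ∀ m : ℕ, l1.countP (fun a => decide (m ≤ a)) ≤ l2.countP (fun a => decide (m ≤ a)))
  | [], [], _, _, _ => by simp
  | [], b :: l2, _, _, h => by simp at h
  | a :: l1, [], _, _, h => by simp at h
  | a :: l1, b :: l2, h1, h2, hlen => by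
    simp only [List.pairwise_cons] at h1 h2
    have hlen' : l1.length = l2.length := by simpa using hlen
    constructor
    · intro h m
      obtain ⟨hab, htail⟩ := List.forall₂_cons.mp h
      have hIH := (sorted_forall2_iff l1 l2 h1.2 h2.2 hlen').mp htail m
      simp only [List.countP_cons, decide_eq_true_eq]
      split_ifs <;> omega
    · intro h
      have hab : a ≤ b := by
        by_contra hba
        have hm := h a
        simp only [List.countP_cons, decide_eq_true_eq] at hm
        rw [if_pos (le_refl a), if_neg (by omega)] at hm
        have h1len : l1.countP (fun y => decide (a ≤ y)) = l1.length :=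
          List.countP_eq_length.mpr (fun y hy => decide_eq_true (h1.1 y hy))
        have h2len : l2.countP (fun y => decide (a ≤ y)) ≤ l2.length :=
          List.countP_le_length
        omega
      refine List.Forall₂.cons hab ((sorted_forall2_iff l1 l2 h1.2 h2.2 hlen').mpr ?_)
      intro m
      by_cases hm : m ≤ b
      · have h2len : l2.countP (fun y => decide (m ≤ y)) = l2.length :=
          List.countP_eq_length.mpr (fun y hy => decide_eq_true (le_trans hm (h2.1 y hy)))
        have h1len : l1.countP (fun y => decide (m ≤ y)) ≤ l1.length :=
          List.countP_le_length
        omega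
      · have hm' := h m
        simp only [List.countP_cons, decide_eq_true_eq] at hm'
        rw [if_neg (by omega), if_neg hm] at hm'
        exact hm'

lemma countP_initSeg {n : ℕ} (x : Fin n → ℕ) (hx : Function.Injective x) (j m : ℕ) :
    (initSeg x j).countP (fun a => decide (m ≤ a)) = cntGe x j m := by
  classical
  have h1 : (initSeg x j).countP (fun a => decide (m ≤ a))
      = Multiset.countP (fun a => m ≤ a)
          (((Finset.univ.filter fun i : Fin n => (i : ℕ) < j).image x).val) := by
    rw [initSeg, ← Finset.sort_eq (r := (· ≤ ·)), Multiset.coe_countP]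
  rw [h1, Multiset.countP_eq_card_filter, ← Finset.filter_val, ← Finset.card_def,
    Finset.filter_image, Finset.card_image_of_injective _ hx, Finset.filter_filter]
  rfl

lemma forall2_initSeg_iff {n : ℕ} {lam : Partition n} (x y : Placement lam) (j : ℕ) :
    List.Forall₂ (· ≤ ·) (initSeg x.col j) (initSeg y.col j) ↔
      ∀ m, cntGe x.col j m ≤ cntGe y.col j m := by
  have hlen : (initSeg x.col j).length = (initSeg y.col j).length := by
    rw [initSeg, initSeg, Finset.length_sort, Finset.length_sort,
      Finset.card_image_of_injective _ x.inj, Finset.card_image_of_injective _ y.inj]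
  refine Iff.trans
    (sorted_forall2_iff _ _ (Finset.pairwise_sort _ _) (Finset.pairwise_sort _ _) hlen) ?_
  apply forall_congr'
  intro m
  rw [countP_initSeg _ x.inj, countP_initSeg _ y.inj]

lemma cntGe_insert {n : ℕ} {tc cc : Fin n → ℕ} {i : Fin n} {j m : ℕ}
    (hij : (i : ℕ) < j)
    (hagree : ∀ r : Fin n, r ≠ i → (r : ℕ) < j → (m ≤ cc r ↔ m ≤ tc r))
    (hti : m ≤ tc i) (hci : ¬ m ≤ cc i) :
    cntGe tc j m = cntGe cc j m + 1 := by
  classical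
  have hset : (Finset.univ.filter fun r : Fin n => (r : ℕ) < j ∧ m ≤ tc r)
      = insert i (Finset.univ.filter fun r : Fin n => (r : ℕ) < j ∧ m ≤ cc r) := by
    ext r
    simp only [Finset.mem_filter, Finset.mem_univ, true_and, Finset.mem_insert]
    by_cases hr : r = i
    · subst hr
      simp [hij, hti]
    · constructor
      · intro hrt
        exact Or.inr ⟨hrt.1, (hagree r hr hrt.1).mpr hrt.2⟩
      · rintro (h | hrc)
        · exact absurd h hr
        · exact ⟨hrc.1, (hagree r hr hrc.1).mp hrc.2⟩
  rw [cntGe, cntGe, hset, Finset.card_insert_of_notMem]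
  simp only [Finset.mem_filter, Finset.mem_univ, true_and, not_and]
  intro _
  exact hci

lemma cntGe_swap {n : ℕ} {tc cc : Fin n → ℕ} {i k : Fin n} {j m : ℕ}
    (hi : (i : ℕ) < j) (hk : (k : ℕ) < j)
    (hci : cc i = tc k) (hck : cc k = tc i)
    (hagree : ∀ r : Fin n, r ≠ i → r ≠ k → cc r = tc r) :
    cntGe cc j m = cntGe tc j m := by
  classical
  have key : ∀ r : Fin n, ((r : ℕ) < j ∧ m ≤ cc r) →
      (((Equiv.swap i k r : Fin n) : ℕ) < j ∧ m ≤ tc (Equiv.swap i k r)) := by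
    intro r hr
    rcases eq_or_ne r i with rfl | hri
    · rw [Equiv.swap_apply_left]
      exact ⟨hk, hci ▸ hr.2⟩
    rcases eq_or_ne r k with rfl | hrk
    · rw [Equiv.swap_apply_right]
      exact ⟨hi, hck ▸ hr.2⟩
    · rw [Equiv.swap_apply_of_ne_of_ne hri hrk]
      exact ⟨hr.1, (hagree r hri hrk) ▸ hr.2⟩
  have key' : ∀ r : Fin n, ((r : ℕ) < j ∧ m ≤ tc r) →
      (((Equiv.swap i k r : Fin n) : ℕ) < j ∧ m ≤ cc (Equiv.swap i k r)) := by
    intro r hr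
    rcases eq_or_ne r i with rfl | hri
    · rw [Equiv.swap_apply_left]
      exact ⟨hk, hck ▸ hr.2⟩
    rcases eq_or_ne r k with rfl | hrk
    · rw [Equiv.swap_apply_right]
      exact ⟨hi, hci ▸ hr.2⟩
    · rw [Equiv.swap_apply_of_ne_of_ne hri hrk]
      refine ⟨hr.1, ?_⟩
      rw [hagree r hri hrk]
      exact hr.2
  apply Finset.card_bij' (fun r _ => Equiv.swap i k r) (fun r _ => Equiv.swap i k r)
  · intro r hr
    simp only [Finset.mem_filter, Finset.mem_univ, true_and] at *
    exact key r hr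
  · intro r hr
    simp only [Finset.mem_filter, Finset.mem_univ, true_and] at *
    exact key' r hr
  · intro r _
    exact Equiv.swap_apply_self i k r
  · intro r _
    exact Equiv.swap_apply_self i k r

lemma chain_step {n : ℕ} {lam : Partition n} (x c t : Placement lam) (i : Fin n) (j m : ℕ)
    (hij : (i : ℕ) < j)
    (H : cntGe x.col ((i : ℕ) + 1) m ≤ cntGe c.col ((i : ℕ) + 1) m)
    (hagree : ∀ r : Fin n, r ≠ i → (r : ℕ) < j → c.col r = t.col r)
    (hti : m ≤ t.col i) (hci : ¬ m ≤ c.col i)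
    (hafter : ∀ r : Fin n, (i : ℕ) < (r : ℕ) → (r : ℕ) < j → m ≤ t.col r) :
    cntGe x.col j m ≤ cntGe c.col j m := by
  classical
  have hi1j : (i : ℕ) + 1 ≤ j := hij
  have ex := cntGe_split x.col m ((i : ℕ) + 1) j hi1j
  have et := cntGe_split t.col m ((i : ℕ) + 1) j hi1j
  have h1 : cntGe t.col ((i : ℕ) + 1) m = cntGe c.col ((i : ℕ) + 1) m + 1 :=
    cntGe_insert (Nat.lt_succ_self _)
      (fun r hr hrj => by rw [hagree r hr (lt_of_lt_of_le hrj hi1j)]) hti hci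
  have h2 : cntGe t.col j m = cntGe c.col j m + 1 :=
    cntGe_insert hij (fun r hr hrj => by rw [hagree r hr hrj]) hti hci
  have hBt : (Finset.univ.filter fun r : Fin n =>
        (i : ℕ) + 1 ≤ (r : ℕ) ∧ (r : ℕ) < j ∧ m ≤ t.col r)
      = (Finset.univ.filter fun r : Fin n => (i : ℕ) + 1 ≤ (r : ℕ) ∧ (r : ℕ) < j) := by
    apply Finset.filter_congr
    intro r _
    constructor
    · exact fun h => ⟨h.1, h.2.1⟩
    · exact fun h => ⟨h.1, h.2, hafter r (by omega) h.2⟩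
  have hBx : (Finset.univ.filter fun r : Fin n =>
        (i : ℕ) + 1 ≤ (r : ℕ) ∧ (r : ℕ) < j ∧ m ≤ x.col r).card
      ≤ (Finset.univ.filter fun r : Fin n => (i : ℕ) + 1 ≤ (r : ℕ) ∧ (r : ℕ) < j).card := by
    apply Finset.card_le_card
    intro r hr
    simp only [Finset.mem_filter, Finset.mem_univ, true_and] at *
    exact ⟨hr.1, hr.2.1⟩
  rw [hBt] at et
  omega


/-- To check whether `x` lies below the coatom `c` of row `i`, it suffices
to check the dominance condition on the sorted initial segments of length `i` only. -/
theorem le_coatom_iff_initSeg {n : ℕ} (lam : Partition n) (t c : Placement lam)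
    (ht : IsGreedy t) (i : Fin n) (hc : MoveOnRow t c i) (x : Placement lam) :
    rle x c ↔
      List.Forall₂ (· ≤ ·) (initSeg x.col ((i : ℕ) + 1)) (initSeg c.col ((i : ℕ) + 1)) := by
  constructor
  · exact fun h => h ((i : ℕ) + 1)
  · intro H
    rw [forall2_initSeg_iff] at H
    intro j
    rw [forall2_initSeg_iff]
    intro m
    have hmax : ∀ j' m', cntGe x.col j' m' ≤ cntGe t.col j' m' := greedy_max t ht x
    rcases hc with ⟨k, hik, htki, hrect, hci, hck, hcr⟩ | ⟨cc, hcc1, hcclt, hfree, hbet, hcic, hcrc⟩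
    · -- switch move on rows i < k
      have hikn : (i : ℕ) < (k : ℕ) := hik
      rcases le_or_gt j (i : ℕ) with hji | hji
      · -- j ≤ i : c agrees with t
        have heq : cntGe c.col j m = cntGe t.col j m := by
          apply cntGe_congr
          intro r hr
          rw [hcr r (by rintro rfl; omega) (by rintro rfl; omega)]
        exact le_of_le_of_eq (hmax j m) heq.symm
      rcases le_or_gt j (k : ℕ) with hjk | hjk
      · -- i < j ≤ k
        rcases le_or_gt m (t.col k) with hm1 | hm1
        · -- m ≤ t_k : indicator unchanged
          have heq : cntGe c.col j m = cntGe t.col j m := by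
            apply cntGe_congr
            intro r hr
            rcases eq_or_ne r i with rfl | hri
            · rw [hci]
              constructor <;> intro <;> omega
            · rw [hcr r hri (by rintro rfl; omega)]
          exact le_of_le_of_eq (hmax j m) heq.symm
        rcases le_or_gt m (t.col i) with hm2 | hm2
        · -- t_k < m ≤ t_i : the hard case
          apply chain_step x c t i j m hji (H m) ?_ hm2 ?_ ?_
          · intro r hri hrj
            exact hcr r hri (by rintro rfl; omega)
          · rw [hci]; omega
          · -- every row strictly between i and j has t-column ≥ m
            intro r hir hrj
            by_contra hmt
            push_neg at hmt
            have hrk : r ≠ k := by rintro rfl; omega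
            have hri : r ≠ i := by rintro rfl; omega
            have hle : lam.part i ≤ lam.part r := lam.mono (by rw [Fin.le_def]; omega)
            have hvk : t.col k ≤ lam.part r :=
              le_trans (le_trans (by omega : t.col k ≤ t.col i) (t.le_part i)) hle
            have hgr : t.col k ≤ t.col r := by
              apply ht r (t.col k) (t.pos k) hvk
              intro k' hk' heq
              have hkk := t.inj heq
              subst hkk
              have : (k' : ℕ) < (r : ℕ) := hk'
              omega
            have hne : t.col r ≠ t.col k := fun h => hrk (t.inj h)
            have := hrect r (by rw [Fin.le_def]; omega) (by rw [Fin.le_def]; omega)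
              (by omega) (by omega)
            rcases this with h | h
            · exact hri h
            · exact hrk h
        · -- t_i < m : indicator unchanged (both false at i)
          have heq : cntGe c.col j m = cntGe t.col j m := by
            apply cntGe_congr
            intro r hr
            rcases eq_or_ne r i with rfl | hri
            · rw [hci]
              constructor <;> intro <;> omega
            · rw [hcr r hri (by rintro rfl; omega)]
          exact le_of_le_of_eq (hmax j m) heq.symm
      · -- j > k : swap the two rows
        have heq : cntGe c.col j m = cntGe t.col j m :=
          cntGe_swap (by omega) (by omega) hci hck hcr
        exact le_of_le_of_eq (hmax j m) heq.symm
    · -- push move on row i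
      rcases le_or_gt j (i : ℕ) with hji | hji
      · have heq : cntGe c.col j m = cntGe t.col j m := by
          apply cntGe_congr
          intro r hr
          rw [hcrc r (by rintro rfl; omega)]
        exact le_of_le_of_eq (hmax j m) heq.symm
      rcases le_or_gt m cc with hm1 | hm1
      · -- m ≤ cc : indicator unchanged (both true at i)
        have heq : cntGe c.col j m = cntGe t.col j m := by
          apply cntGe_congr
          intro r hr
          rcases eq_or_ne r i with rfl | hri
          · rw [hcic]
            constructor <;> intro <;> omega
          · rw [hcrc r hri]
        exact le_of_le_of_eq (hmax j m) heq.symm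
      rcases le_or_gt m (t.col i) with hm2 | hm2
      · -- cc < m ≤ t_i : the hard case
        apply chain_step x c t i j m hji (H m) ?_ hm2 ?_ ?_
        · intro r hri _
          exact hcrc r hri
        · rw [hcic]; omega
        · intro r hir hrj
          by_contra hmt
          push_neg at hmt
          have hri : r ≠ i := by rintro rfl; omega
          have hccr : cc ≤ lam.part r :=
            le_trans (le_of_lt hcclt)
              (le_trans (t.le_part i) (lam.mono (by rw [Fin.le_def]; omega)))
          have hgr : cc ≤ t.col r := ht r cc hcc1 hccr (fun k' _ => hfree k')
          have hne : t.col r ≠ cc := hfree r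
          obtain ⟨r', hr'i, hr'col⟩ := hbet (t.col r) (by omega) (by omega)
          have heq := t.inj hr'col
          subst heq
          have : (r' : ℕ) < (i : ℕ) := hr'i
          omega
      · -- t_i < m : indicator unchanged (both false at i)
        have heq : cntGe c.col j m = cntGe t.col j m := by
          apply cntGe_congr
          intro r hr
          rcases eq_or_ne r i with rfl | hri
          · rw [hcic]
            constructor <;> intro <;> omega
          · rw [hcrc r hri]
        exact le_of_le_of_eq (hmax j m) heq.symm

end RookPoset
end

section
/- (i) For every partition λ with n parts and λ_n ≤ n + 1, the completed permutation σ_{1̂} of the maximum 1̂ of P_λ is a 312-avoiding permutation of {1, …, λ_n}. (ii) Conversely, for every 312-avoiding permutation τ of {1, …, N} there exists a partition λ with n parts, λ_n = N and N ≤ n + 1, such that τ = σ_{1̂} for the maximum 1̂ of P_λ. -/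
namespace RookPoset

/-- (i) For a partition with `λ_n ≤ n + 1`, the completed permutation of
the greedy maximum `1̂` is a `312`-avoiding permutation of `{1, …, λ_n}`. (ii) Every
`312`-avoiding permutation of `{1, …, N}` arises this way from a partition with `n` parts,
`λ_n = N` and `N ≤ n + 1`. -/
theorem sigma_top_avoids312 :
    (∀ (n : ℕ) (lam : Partition n) (t : Placement lam), IsGreedy t →
      lam.maxPart ≤ n + 1 →
      Set.BijOn t.sigma (Set.Icc 1 lam.maxPart) (Set.Icc 1 lam.maxPart) ∧
      Avoids312 lam.maxPart t.sigma) ∧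
    (∀ (N : ℕ) (τ : ℕ → ℕ), Set.BijOn τ (Set.Icc 1 N) (Set.Icc 1 N) → Avoids312 N τ →
      ∃ (n : ℕ) (lam : Partition n) (t : Placement lam), IsGreedy t ∧
        lam.maxPart = N ∧ N ≤ n + 1 ∧ Set.EqOn τ t.sigma (Set.Icc 1 N)) := by
  constructor
  · -- part (i)
    intro n lam t ht hM
    set M := lam.maxPart with hMdef
    -- basic facts
    have hpartM : ∀ i : Fin n, lam.part i ≤ M := fun i =>
      Finset.le_sup (Finset.mem_univ i)
    have hcolM : ∀ i : Fin n, t.col i ≤ M := fun i => le_trans (t.le_part i) (hpartM i)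
    -- sigma on [1,n]
    have hs : ∀ a : ℕ, (h : 1 ≤ a ∧ a ≤ n) → t.sigma a = t.col ⟨a - 1, by omega⟩ := by
      intro a h
      unfold Placement.sigma
      rw [dif_pos h]
    rcases Nat.eq_zero_or_pos n with hn0 | hn0
    · -- n = 0
      subst hn0
      have hM0 : M = 0 := by
        simp [hMdef, Partition.maxPart]
      rw [hM0]
      constructor
      · rw [Set.Icc_eq_empty (by omega)]
        exact Set.bijOn_empty _
      · intro a b c ha hab hbc hc
        omega
    · -- n ≥ 1
      have hnM : n ≤ M := by
        have h1 := lam.staircase ⟨n - 1, by omega⟩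
        have h2 := hpartM ⟨n - 1, by omega⟩
        simp only at h1
        omega
      set S : Finset ℕ := Finset.univ.image t.col with hSdef
      have hScard : S.card = n := by
        rw [hSdef, Finset.card_image_of_injective _ t.inj, Finset.card_univ, Fintype.card_fin]
      have hSsub : S ⊆ Finset.Icc 1 M := by
        intro w hw
        rw [hSdef] at hw
        obtain ⟨i, _, rfl⟩ := Finset.mem_image.mp hw
        exact Finset.mem_Icc.mpr ⟨t.pos i, hcolM i⟩
      -- the key greedy fact used for 312 avoidance
      have key : ∀ (a b : ℕ) (m : ℕ), 1 ≤ a → a < b → b ≤ n → 1 ≤ m →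
          m < t.sigma a → (∀ k : Fin n, t.col k ≠ m ∨ ¬ ((k : ℕ) < b - 1)) →
          m ≤ t.sigma b := by
        intro a b m ha hab hbn hm hlt hunused
        rw [hs a ⟨ha, by omega⟩] at hlt
        rw [hs b ⟨by omega, hbn⟩]
        refine ht ⟨b - 1, by omega⟩ m hm ?_ ?_
        · have h1 : t.col ⟨a - 1, by omega⟩ ≤ lam.part ⟨a - 1, by omega⟩ := t.le_part _
          have h2 : lam.part ⟨a - 1, by omega⟩ ≤ lam.part ⟨b - 1, by omega⟩ := by
            apply lam.mono
            simp only [Fin.mk_le_mk]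
            omega
          omega
        · intro k hk
          rcases hunused k with h | h
          · exact h
          · exact absurd (by simpa [Fin.lt_def] using hk) h
      rcases Nat.lt_or_ge n M with hMgt | hMlt
      · -- M = n + 1
        have hMeq : M = n + 1 := by omega
        have hmiss : (Finset.Icc 1 M \ S).card = 1 := by
          rw [Finset.card_sdiff_of_subset hSsub, Nat.card_Icc, hScard]
          omega
        obtain ⟨v, hv⟩ := Finset.card_eq_one.mp hmiss
        have hvmem : v ∈ Finset.Icc 1 M \ S := hv ▸ Finset.mem_singleton_self v
        have hvIcc : v ∈ Finset.Icc 1 M := (Finset.mem_sdiff.mp hvmem).1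
        have hvS : v ∉ S := (Finset.mem_sdiff.mp hvmem).2
        have hsv : t.sigma (n + 1) = v := by
          unfold Placement.sigma
          rw [dif_neg (by omega)]
          rw [← hMdef, hv]
          simp
        have hvb := Finset.mem_Icc.mp hvIcc
        constructor
        · refine ⟨?_, ?_, ?_⟩
          · intro a haMem
            rw [Set.mem_Icc] at haMem
            rcases Nat.lt_or_ge a (n + 1) with h | h
            · rw [hs a ⟨haMem.1, by omega⟩]
              exact Set.mem_Icc.mpr ⟨t.pos _, hcolM _⟩
            · have : a = n + 1 := by omega
              rw [this, hsv]
              exact Set.mem_Icc.mpr hvb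
          · intro a haMem b hbMem hab
            rw [Set.mem_Icc] at haMem hbMem
            rcases Nat.lt_or_ge a (n + 1) with h1 | h1 <;>
              rcases Nat.lt_or_ge b (n + 1) with h2 | h2
            · rw [hs a ⟨haMem.1, by omega⟩, hs b ⟨hbMem.1, by omega⟩] at hab
              have := t.inj hab
              rw [Fin.mk.injEq] at this
              omega
            · exfalso
              have hb : b = n + 1 := by omega
              subst hb
              rw [hs a ⟨haMem.1, by omega⟩, hsv] at hab
              exact hvS (hab ▸ Finset.mem_image.mpr ⟨_, Finset.mem_univ _, rfl⟩)
            · exfalso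
              have ha : a = n + 1 := by omega
              subst ha
              rw [hs b ⟨hbMem.1, by omega⟩, hsv] at hab
              exact hvS (hab.symm ▸ Finset.mem_image.mpr ⟨_, Finset.mem_univ _, rfl⟩)
            · omega
          · intro w hwMem
            rw [Set.mem_Icc] at hwMem
            by_cases hwS : w ∈ S
            · obtain ⟨i, _, rfl⟩ := Finset.mem_image.mp hwS
              refine ⟨(i : ℕ) + 1, ?_, ?_⟩
              · have := i.isLt; exact Set.mem_Icc.mpr ⟨by omega, by omega⟩
              · rw [hs ((i : ℕ) + 1) ⟨by omega, by omega⟩]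
                congr 1
            · have : w ∈ Finset.Icc 1 M \ S :=
                Finset.mem_sdiff.mpr ⟨Finset.mem_Icc.mpr hwMem, hwS⟩
              rw [hv, Finset.mem_singleton] at this
              refine ⟨n + 1, Set.mem_Icc.mpr ⟨by omega, by omega⟩, by rw [hsv, this]⟩
        · -- 312 avoidance
          intro a b c ha hab hbc hc hcon
          obtain ⟨h1, h2⟩ := hcon
          have hbn : b ≤ n := by omega
          rcases Nat.lt_or_ge c (n + 1) with hcn | hcn
          · -- c ≤ n : σ c is a rook column
            have hsc := hs c ⟨by omega, by omega⟩
            have := key a b (t.sigma c) ha hab hbn (by rw [hsc]; exact t.pos _) h2 ?_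
            · omega
            · intro k
              by_cases hk : (k : ℕ) < b - 1
              · left
                rw [hsc]
                intro hkc
                have := t.inj hkc
                rw [this] at hk
                simp at hk
                omega
              · right; exact hk
          · -- c = n + 1 : σ c = v
            have hc1 : c = n + 1 := by omega
            rw [hc1, hsv] at h1 h2
            have := key a b v ha hab hbn hvb.1 h2 ?_
            · omega
            · intro k
              left
              intro hkv
              exact hvS (hkv ▸ Finset.mem_image.mpr ⟨_, Finset.mem_univ _, rfl⟩)
      · -- M = n
        have hMeq : M = n := by omega
        have hSeq : S = Finset.Icc 1 M := by
          apply Finset.eq_of_subset_of_card_le hSsub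
          rw [Nat.card_Icc, hScard]; omega
        constructor
        · refine ⟨?_, ?_, ?_⟩
          · intro a haMem
            rw [Set.mem_Icc] at haMem
            rw [hs a ⟨haMem.1, by omega⟩]
            exact Set.mem_Icc.mpr ⟨t.pos _, hcolM _⟩
          · intro a haMem b hbMem hab
            rw [Set.mem_Icc] at haMem hbMem
            rw [hs a ⟨haMem.1, by omega⟩, hs b ⟨hbMem.1, by omega⟩] at hab
            have := t.inj hab
            rw [Fin.mk.injEq] at this
            omega
          · intro w hwMem
            have hwS : w ∈ S := by
              rw [hSeq, Finset.mem_Icc]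
              exact Set.mem_Icc.mp hwMem
            obtain ⟨i, _, rfl⟩ := Finset.mem_image.mp hwS
            refine ⟨(i : ℕ) + 1, ?_, ?_⟩
            · have := i.isLt; exact Set.mem_Icc.mpr ⟨by omega, by omega⟩
            · rw [hs ((i : ℕ) + 1) ⟨by omega, by omega⟩]
              congr 1
        · intro a b c ha hab hbc hc hcon
          obtain ⟨h1, h2⟩ := hcon
          have hbn : b ≤ n := by omega
          have hsc := hs c ⟨by omega, by omega⟩
          have := key a b (t.sigma c) ha hab hbn (by rw [hsc]; exact t.pos _) h2 ?_
          · omega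
          · intro k
            by_cases hk : (k : ℕ) < b - 1
            · left
              rw [hsc]
              intro hkc
              have := t.inj hkc
              rw [this] at hk
              simp at hk
              omega
            · right; exact hk
  · -- part (ii)
    intro N τ hbij h312
    obtain ⟨hmap, hinj, hsurj⟩ := hbij
    have hτmem : ∀ j, 1 ≤ j → j ≤ N → 1 ≤ τ j ∧ τ j ≤ N := by
      intro j h1 h2
      exact Set.mem_Icc.mp (hmap (Set.mem_Icc.mpr ⟨h1, h2⟩))
    -- the partition
    have hstair : ∀ i : Fin N, (i : ℕ) + 1 ≤ (Finset.Icc 1 ((i : ℕ) + 1)).sup τ := by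
      intro i
      set s := (Finset.Icc 1 ((i : ℕ) + 1)).sup τ with hsdef
      have hIm : (Finset.Icc 1 ((i : ℕ) + 1)).image τ ⊆ Finset.Icc 1 s := by
        intro w hw
        obtain ⟨j, hj, rfl⟩ := Finset.mem_image.mp hw
        rw [Finset.mem_Icc] at hj
        have := i.isLt
        exact Finset.mem_Icc.mpr ⟨(hτmem j hj.1 (by omega)).1,
          Finset.le_sup (Finset.mem_Icc.mpr hj)⟩
      have hcard : ((Finset.Icc 1 ((i : ℕ) + 1)).image τ).card = (i : ℕ) + 1 := by
        have hinj' : Set.InjOn τ (Finset.Icc 1 ((i : ℕ) + 1) : Set ℕ) := by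
          intro x hx y hy hxy
          rw [Finset.mem_coe, Finset.mem_Icc] at hx hy
          have := i.isLt
          exact hinj (Set.mem_Icc.mpr ⟨hx.1, by omega⟩) (Set.mem_Icc.mpr ⟨hy.1, by omega⟩) hxy
        rw [Finset.card_image_of_injOn hinj', Nat.card_Icc]
        omega
      have := Finset.card_le_card hIm
      rw [hcard, Nat.card_Icc] at this
      omega
    refine ⟨N, ⟨fun i => (Finset.Icc 1 ((i : ℕ) + 1)).sup τ, ?_, hstair⟩,
      ⟨fun i => τ ((i : ℕ) + 1), ?_, ?_, ?_⟩, ?_, ?_, by omega, ?_⟩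
    · -- mono
      intro i j hij
      exact Finset.sup_mono (Finset.Icc_subset_Icc_right (by omega))
    · -- inj
      intro i j hij
      have hi := i.isLt
      have hj := j.isLt
      have := hinj (Set.mem_Icc.mpr ⟨by omega, by omega⟩)
        (Set.mem_Icc.mpr ⟨by omega, by omega⟩) hij
      exact Fin.ext (by omega)
    · -- pos
      intro i
      have := i.isLt
      exact (hτmem _ (by omega) (by omega)).1
    · -- le_part
      intro i
      have h : ((i : ℕ) + 1) ∈ Finset.Icc 1 ((i : ℕ) + 1) :=
        Finset.mem_Icc.mpr ⟨by omega, le_refl _⟩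
      exact Finset.le_sup h
    · -- IsGreedy
      intro i m h1m hmpart hunused
      by_contra hcon
      push_neg at hcon
      have hcon' : τ ((i : ℕ) + 1) < m := hcon
      clear hcon
      have hi := i.isLt
      -- m ≤ sup, m ≥ 1, so m ≤ τ j for some j ∈ [1, i+1]
      have hmpart' : m ≤ (Finset.Icc 1 ((i : ℕ) + 1)).sup τ := hmpart
      obtain ⟨j, hjmem, hjm⟩ := (Finset.le_sup_iff (by omega : (0:ℕ) < m)).mp hmpart'
      rw [Finset.mem_Icc] at hjmem
      have hji : j ≤ (i : ℕ) := by
        rcases Nat.lt_or_ge j ((i : ℕ) + 1) with h | h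
        · omega
        · exfalso
          have : j = (i : ℕ) + 1 := by omega
          rw [this] at hjm
          omega
      have hmN : m ≤ N := le_trans hjm (hτmem j hjmem.1 (by omega)).2
      -- m = τ c for some c
      obtain ⟨c, hcmem, hcτ⟩ := hsurj (Set.mem_Icc.mpr ⟨h1m, hmN⟩)
      rw [Set.mem_Icc] at hcmem
      rcases Nat.lt_or_ge c ((i : ℕ) + 1) with hci | hci
      · -- c ≤ i : m is used below, contradiction
        refine hunused ⟨c - 1, by omega⟩ (by rw [Fin.lt_def]; simp; omega) ?_
        show τ (c - 1 + 1) = m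
        rw [show c - 1 + 1 = c by omega]
        exact hcτ
      · rcases Nat.eq_or_lt_of_le hci with hci' | hci'
        · rw [hci', hcτ] at hcon'
          omega
        · -- 312 pattern j < i+1 < c
          refine h312 j ((i : ℕ) + 1) c hjmem.1 (by omega) hci' hcmem.2 ⟨?_, ?_⟩
          · rw [hcτ]; omega
          · rw [hcτ]
            rcases Nat.eq_or_lt_of_le hjm with h | h
            · exfalso
              have : c = j := hinj (Set.mem_Icc.mpr ⟨hcmem.1, hcmem.2⟩)
                (Set.mem_Icc.mpr ⟨hjmem.1, by omega⟩) (by omega)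
              omega
            · omega
    · -- maxPart = N
      show Finset.univ.sup _ = N
      rcases Nat.eq_zero_or_pos N with h0 | h0
      · subst h0
        simp
      · apply le_antisymm
        · refine Finset.sup_le fun i _ => ?_
          show (Finset.Icc 1 ((i : ℕ) + 1)).sup τ ≤ N
          refine Finset.sup_le fun j hj => ?_
          rw [Finset.mem_Icc] at hj
          have := i.isLt
          exact (hτmem j hj.1 (by omega)).2
        · obtain ⟨c, hcmem, hcτ⟩ := hsurj (Set.mem_Icc.mpr ⟨h0, le_refl N⟩)
          rw [Set.mem_Icc] at hcmem
          calc N = τ c := hcτ.symm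
            _ ≤ (Finset.Icc 1 (((⟨N - 1, by omega⟩ : Fin N) : ℕ) + 1)).sup τ := by
                apply Finset.le_sup
                rw [Finset.mem_Icc]
                constructor
                · exact hcmem.1
                · simp; omega
            _ ≤ _ := Finset.le_sup (f := fun i : Fin N => (Finset.Icc 1 ((i : ℕ) + 1)).sup τ)
                (Finset.mem_univ (⟨N - 1, by omega⟩ : Fin N))
    · -- EqOn
      intro a haMem
      rw [Set.mem_Icc] at haMem
      unfold Placement.sigma
      rw [dif_pos ⟨haMem.1, haMem.2⟩]
      simp only
      congr 1
      omega

end RookPoset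
end

section
/- Let λ be a partition with n parts such that λ_n ≤ n + 1 (the last entry of the GJW sequence is 0 or 1). Then the map x ↦ σ_x is an order isomorphism from the rook poset P_λ onto the lower interval {τ ∈ S_{λ_n} : τ ≤ σ_{1̂}} of the symmetric group on {1, …, λ_n} under the Bruhat order, where the Bruhat order is characterized by: σ ≤ τ iff for every j, when {σ(1), …, σ(j)} and {τ(1), …, τ(j)} are each listed in increasing order, the list for σ is componentwise ≤ the list for τ. -/
namespace RookPoset

section Aux

variable {n : ℕ} {lam : Partition n}

lemma part_le_maxPart (lam : Partition n) (i : Fin n) : lam.part i ≤ lam.maxPart :=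
  Finset.le_sup (Finset.mem_univ i)

lemma n_le_maxPart (lam : Partition n) : n ≤ lam.maxPart := by
  rcases Nat.eq_zero_or_pos n with h | h
  · omega
  · have h1 : n - 1 + 1 ≤ lam.part ⟨n - 1, by omega⟩ := lam.staircase ⟨n - 1, by omega⟩
    have h2 := part_le_maxPart lam ⟨n - 1, by omega⟩
    omega

lemma Placement.ext' {x y : Placement lam} (h : x.col = y.col) : x = y := by
  cases x; cases y; simpa using h

lemma col_le_maxPart (x : Placement lam) (i : Fin n) : x.col i ≤ lam.maxPart :=
  (x.le_part i).trans (part_le_maxPart lam i)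

lemma image_col_subset (x : Placement lam) :
    Finset.univ.image x.col ⊆ Finset.Icc 1 lam.maxPart := by
  intro c hc
  obtain ⟨i, -, rfl⟩ := Finset.mem_image.mp hc
  exact Finset.mem_Icc.mpr ⟨x.pos i, col_le_maxPart x i⟩

lemma card_image_col (x : Placement lam) : (Finset.univ.image x.col).card = n := by
  rw [Finset.card_image_of_injective _ x.inj, Finset.card_univ, Fintype.card_fin]

lemma card_compl_col (x : Placement lam) :
    (Finset.Icc 1 lam.maxPart \ Finset.univ.image x.col).card = lam.maxPart - n := by
  rw [Finset.card_sdiff_of_subset (image_col_subset x), card_image_col, Nat.card_Icc]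
  omega

lemma sigma_of_le (x : Placement lam) {a : ℕ} (h1 : 1 ≤ a) (h2 : a ≤ n) :
    x.sigma a = x.col ⟨a - 1, by omega⟩ := by
  rw [Placement.sigma, dif_pos ⟨h1, h2⟩]

lemma sigma_col (x : Placement lam) (i : Fin n) : x.sigma ((i : ℕ) + 1) = x.col i := by
  rw [sigma_of_le x (by omega) (Nat.succ_le_of_lt i.isLt)]
  congr 1

lemma missing_spec (hN : lam.maxPart = n + 1) (x : Placement lam) :
    ∃ m, (Finset.Icc 1 lam.maxPart \ Finset.univ.image x.col) = {m} ∧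
      x.sigma (n + 1) = m := by
  have hc : (Finset.Icc 1 lam.maxPart \ Finset.univ.image x.col).card = 1 := by
    rw [card_compl_col x]; omega
  obtain ⟨m, hm⟩ := Finset.card_eq_one.mp hc
  refine ⟨m, hm, ?_⟩
  rw [Placement.sigma, dif_neg (by omega), hm]
  have h0 : n + 1 - n - 1 = 0 := by omega
  rw [h0, Finset.sort_singleton]
  rfl

lemma sigma_bounds (hN : lam.maxPart ≤ n + 1) (x : Placement lam) {a : ℕ}
    (h1 : 1 ≤ a) (h2 : a ≤ lam.maxPart) :
    1 ≤ x.sigma a ∧ x.sigma a ≤ lam.maxPart := by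
  by_cases h : a ≤ n
  · rw [sigma_of_le x h1 h]
    exact ⟨x.pos _, col_le_maxPart x _⟩
  · have hN' : lam.maxPart = n + 1 := by omega
    obtain ⟨m, hm, hs⟩ := missing_spec hN' x
    have ha : a = n + 1 := by omega
    subst ha
    rw [hs]
    have hmem : m ∈ Finset.Icc 1 lam.maxPart :=
      (Finset.mem_sdiff.mp (hm ▸ Finset.mem_singleton_self m)).1
    exact Finset.mem_Icc.mp hmem

lemma sigma_inj (hN : lam.maxPart ≤ n + 1) (x : Placement lam) {a b : ℕ}
    (ha1 : 1 ≤ a) (ha2 : a ≤ lam.maxPart) (hb1 : 1 ≤ b) (hb2 : b ≤ lam.maxPart)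
    (h : x.sigma a = x.sigma b) : a = b := by
  by_cases hA : a ≤ n <;> by_cases hB : b ≤ n
  · rw [sigma_of_le x ha1 hA, sigma_of_le x hb1 hB] at h
    have h2 : (⟨a - 1, by omega⟩ : Fin n) = ⟨b - 1, by omega⟩ := x.inj h
    have h3 : a - 1 = b - 1 := congrArg Fin.val h2
    omega
  · have hN' : lam.maxPart = n + 1 := by omega
    obtain ⟨m, hm, hs⟩ := missing_spec hN' x
    have hb : b = n + 1 := by omega
    subst hb
    rw [sigma_of_le x ha1 hA, hs] at h
    have hmem : m ∉ Finset.univ.image x.col :=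
      (Finset.mem_sdiff.mp (hm ▸ Finset.mem_singleton_self m)).2
    exact absurd (Finset.mem_image.mpr ⟨⟨a - 1, by omega⟩, Finset.mem_univ _, h⟩) hmem
  · have hN' : lam.maxPart = n + 1 := by omega
    obtain ⟨m, hm, hs⟩ := missing_spec hN' x
    have ha : a = n + 1 := by omega
    subst ha
    rw [sigma_of_le x hb1 hB, hs] at h
    have hmem : m ∉ Finset.univ.image x.col :=
      (Finset.mem_sdiff.mp (hm ▸ Finset.mem_singleton_self m)).2
    exact absurd (Finset.mem_image.mpr ⟨⟨b - 1, by omega⟩, Finset.mem_univ _, h.symm⟩) hmem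
  · omega

noncomputable def toPerm (hN : lam.maxPart ≤ n + 1) (x : Placement lam) :
    Equiv.Perm (Fin lam.maxPart) :=
  Equiv.ofBijective
    (fun a => ⟨x.sigma ((a : ℕ) + 1) - 1, by
      have hb := sigma_bounds hN x (a := (a : ℕ) + 1) (by omega) (Nat.succ_le_of_lt a.isLt)
      omega⟩)
    (Finite.injective_iff_bijective.mp (by
      intro a b h
      have h' : x.sigma ((a : ℕ) + 1) - 1 = x.sigma ((b : ℕ) + 1) - 1 := congrArg Fin.val h
      have ha := sigma_bounds hN x (a := (a : ℕ) + 1) (by omega) (Nat.succ_le_of_lt a.isLt)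
      have hb := sigma_bounds hN x (a := (b : ℕ) + 1) (by omega) (Nat.succ_le_of_lt b.isLt)
      have hs : x.sigma ((a : ℕ) + 1) = x.sigma ((b : ℕ) + 1) := by omega
      have := sigma_inj hN x (by omega) (Nat.succ_le_of_lt a.isLt) (by omega)
        (Nat.succ_le_of_lt b.isLt) hs
      exact Fin.ext (by omega)))

lemma toPerm_apply (hN : lam.maxPart ≤ n + 1) (x : Placement lam) (a : Fin lam.maxPart) :
    ((toPerm hN x) a : ℕ) + 1 = x.sigma ((a : ℕ) + 1) := by
  have hb := (sigma_bounds hN x (a := (a : ℕ) + 1) (by omega) (Nat.succ_le_of_lt a.isLt)).1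
  show x.sigma ((a : ℕ) + 1) - 1 + 1 = _
  omega

lemma toPerm_col (hN : lam.maxPart ≤ n + 1) (x : Placement lam) (i : Fin n)
    (hi : (i : ℕ) < lam.maxPart) :
    ((toPerm hN x) ⟨i, hi⟩ : ℕ) + 1 = x.col i := by
  have h := toPerm_apply hN x ⟨i, hi⟩
  simp only [Fin.val_mk] at h
  rwa [sigma_col x i] at h

/-- The initial-segment value set. -/
def segSet {m : ℕ} (g : Fin m → ℕ) (j : ℕ) : Finset ℕ :=
  (Finset.univ.filter fun i : Fin m => (i : ℕ) < j).image g

lemma initSeg_eq {m : ℕ} (g : Fin m → ℕ) (j : ℕ) :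
    initSeg g j = (segSet g j).sort (· ≤ ·) := rfl

lemma card_segSet' {m : ℕ} {g : Fin m → ℕ} (hg : Function.Injective g) {j : ℕ}
    (hj : j ≤ m) : (segSet g j).card = j := by
  unfold segSet
  rw [Finset.card_image_of_injective _ hg]
  have he : (Finset.univ.filter fun i : Fin m => (i : ℕ) < j)
      = (Finset.range j).attachFin
        (fun k hk => lt_of_lt_of_le (Finset.mem_range.mp hk) hj) := by
    ext i
    simp [Finset.mem_attachFin]
  rw [he, Finset.card_attachFin, Finset.card_range]

lemma initSeg_stable {m : ℕ} (g : Fin m → ℕ) {j : ℕ} (hj : m ≤ j) :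
    initSeg g j = initSeg g m := by
  unfold initSeg
  have he : (Finset.univ.filter fun i : Fin m => (i : ℕ) < j)
      = (Finset.univ.filter fun i : Fin m => (i : ℕ) < m) := by
    apply Finset.filter_congr
    intro i _
    exact iff_of_true (lt_of_lt_of_le i.isLt hj) i.isLt
  rw [he]

lemma sort_image_pred (S : Finset ℕ) (hS : ∀ a ∈ S, 1 ≤ a) :
    (S.image (· - 1)).sort (· ≤ ·) = (S.sort (· ≤ ·)).map (· - 1) := by
  refine (fun hp h1 h2 => List.Perm.eq_of_pairwise' (r := (· ≤ · : ℕ → ℕ → Prop)) h1 h2 hp) ?_ ?_ ?_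
  · apply Multiset.coe_eq_coe.mp
    have h2 : (S.image (· - 1)).val = Multiset.map (· - 1) S.val :=
      Finset.image_val_of_injOn (by
        intro a ha b hb hab
        have := hS a ha
        have := hS b hb
        simp only at hab
        omega)
    calc ((S.image (· - 1)).sort (· ≤ ·) : Multiset ℕ) = (S.image (· - 1)).val :=
          Finset.sort_eq _ _
      _ = Multiset.map (· - 1) S.val := h2
      _ = Multiset.map (· - 1) ((S.sort (· ≤ ·) : List ℕ) : Multiset ℕ) := by
          rw [Finset.sort_eq]
      _ = (((S.sort (· ≤ ·)).map (· - 1) : List ℕ) : Multiset ℕ) := by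
          rw [Multiset.map_coe]
  · exact Finset.pairwise_sort _ _
  · exact List.Pairwise.map _ (fun a b h => Nat.sub_le_sub_right h 1)
      (Finset.pairwise_sort _ _)

lemma segSet_toPerm (hN : lam.maxPart ≤ n + 1) (x : Placement lam) {j : ℕ} (hj : j ≤ n) :
    segSet (fun a : Fin lam.maxPart => ((toPerm hN x) a : ℕ)) j
      = (segSet x.col j).image (· - 1) := by
  ext c
  simp only [segSet, Finset.mem_image, Finset.mem_filter, Finset.mem_univ, true_and]
  constructor
  · rintro ⟨a, haj, rfl⟩
    have han : (a : ℕ) < n := lt_of_lt_of_le haj hj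
    refine ⟨x.col ⟨a, han⟩, ⟨⟨a, han⟩, haj, rfl⟩, ?_⟩
    have h1 : ((toPerm hN x) a : ℕ) + 1 = x.col ⟨a, han⟩ := by
      simpa using toPerm_col hN x ⟨a, han⟩ a.isLt
    omega
  · rintro ⟨c', ⟨i, hij, rfl⟩, rfl⟩
    have hiN : (i : ℕ) < lam.maxPart := lt_of_lt_of_le i.isLt (n_le_maxPart lam)
    refine ⟨⟨i, hiN⟩, hij, ?_⟩
    have h1 := toPerm_col hN x i hiN
    omega

lemma mem_segSet_col_pos (x : Placement lam) (j : ℕ) :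
    ∀ a ∈ segSet x.col j, 1 ≤ a := by
  intro a ha
  obtain ⟨i, -, rfl⟩ := Finset.mem_image.mp ha
  exact x.pos i

lemma mem_initSeg_pos (x : Placement lam) (j : ℕ) : ∀ a ∈ initSeg x.col j, 1 ≤ a := by
  intro a ha
  rw [initSeg_eq, Finset.mem_sort] at ha
  exact mem_segSet_col_pos x j a ha

lemma initSeg_toPerm (hN : lam.maxPart ≤ n + 1) (x : Placement lam) {j : ℕ} (hj : j ≤ n) :
    initSeg (fun a : Fin lam.maxPart => ((toPerm hN x) a : ℕ)) j
      = (initSeg x.col j).map (· - 1) := by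
  rw [initSeg_eq, initSeg_eq, segSet_toPerm hN x hj]
  exact sort_image_pred _ (mem_segSet_col_pos x j)

lemma initSeg_perm_univ {N : ℕ} (π : Equiv.Perm (Fin N)) {j : ℕ} (hj : N ≤ j) :
    initSeg (fun a : Fin N => ((π a : ℕ))) j = initSeg (fun a : Fin N => (a : ℕ)) j := by
  unfold initSeg
  have hfil : (Finset.univ.filter fun i : Fin N => (i : ℕ) < j) = Finset.univ :=
    Finset.filter_true_of_mem fun i _ => lt_of_lt_of_le i.isLt hj
  rw [hfil]
  congr 1
  rw [show (fun a : Fin N => ((π a : ℕ))) = Fin.val ∘ π from rfl, ← Finset.image_image,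
    Finset.image_univ_of_surjective π.surjective]

lemma forall₂_le_of_sub : ∀ {l1 l2 : List ℕ},
    List.Forall₂ (fun a b => a - 1 ≤ b - 1) l1 l2 →
    (∀ a ∈ l1, 1 ≤ a) → (∀ a ∈ l2, 1 ≤ a) → List.Forall₂ (· ≤ ·) l1 l2 := by
  intro l1 l2 h
  induction h with
  | nil => intro _ _; exact List.Forall₂.nil
  | @cons a b l1' l2' hab htl ih =>
    intro h1 h2
    refine List.Forall₂.cons ?_
      (ih (fun c hc => h1 c (List.mem_cons_of_mem _ hc))
        (fun c hc => h2 c (List.mem_cons_of_mem _ hc)))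
    have := h1 a List.mem_cons_self
    have := h2 b List.mem_cons_self
    omega

lemma rle_iff_bruhat (hN : lam.maxPart ≤ n + 1) (x y : Placement lam) :
    rle x y ↔ bruhatLE (toPerm hN x) (toPerm hN y) := by
  constructor
  · intro h j
    by_cases hj : j ≤ n
    · rw [initSeg_toPerm hN x hj, initSeg_toPerm hN y hj,
        List.forall₂_map_left_iff, List.forall₂_map_right_iff]
      exact (h j).imp (fun a b hab => Nat.sub_le_sub_right hab 1)
    · have hjN : lam.maxPart ≤ j := by omega
      rw [initSeg_perm_univ _ hjN, initSeg_perm_univ _ hjN]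
      exact List.forall₂_same.mpr fun a _ => le_refl a
  · intro h
    have key : ∀ j, j ≤ n →
        List.Forall₂ (· ≤ ·) (initSeg x.col j) (initSeg y.col j) := by
      intro j hj
      have hb := h j
      rw [initSeg_toPerm hN x hj, initSeg_toPerm hN y hj,
        List.forall₂_map_left_iff, List.forall₂_map_right_iff] at hb
      exact forall₂_le_of_sub hb (mem_initSeg_pos x j) (mem_initSeg_pos y j)
    intro j
    rcases le_or_gt j n with hj | hj
    · exact key j hj
    · rw [initSeg_stable x.col hj.le, initSeg_stable y.col hj.le]
      exact key n le_rfl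

/-- Counting function: number of rooks in rows `< j` (0-based) with column `≥ v`. -/
def Fcnt (y : Placement lam) (j v : ℕ) : ℕ :=
  (Finset.univ.filter fun i : Fin n => (i : ℕ) < j ∧ v ≤ y.col i).card

lemma Fcnt_mono_j (y : Placement lam) {j j' : ℕ} (h : j ≤ j') (v : ℕ) :
    Fcnt y j v ≤ Fcnt y j' v := by
  apply Finset.card_le_card
  apply Finset.monotone_filter_right
  intro i _ hi
  exact ⟨lt_of_lt_of_le hi.1 h, hi.2⟩

lemma Fcnt_succ_of_not (y : Placement lam) {j v : ℕ}
    (h : ∀ hj : j < n, ¬ v ≤ y.col ⟨j, hj⟩) :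
    Fcnt y (j + 1) v = Fcnt y j v := by
  unfold Fcnt
  congr 1
  apply Finset.filter_congr
  intro i _
  constructor
  · rintro ⟨hlt, hv⟩
    rcases Nat.lt_succ_iff_lt_or_eq.mp hlt with h' | h'
    · exact ⟨h', hv⟩
    · have hjn : j < n := h' ▸ i.isLt
      have : i = ⟨j, hjn⟩ := Fin.ext h'
      exact absurd hv (this ▸ h hjn)
  · rintro ⟨hlt, hv⟩
    exact ⟨Nat.lt_succ_of_lt hlt, hv⟩

lemma Fcnt_succ_of_yes (y : Placement lam) {j v : ℕ} (hj : j < n)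
    (h : v ≤ y.col ⟨j, hj⟩) :
    Fcnt y (j + 1) v = Fcnt y j v + 1 := by
  unfold Fcnt
  have he : (Finset.univ.filter fun i : Fin n => (i : ℕ) < j + 1 ∧ v ≤ y.col i)
      = insert ⟨j, hj⟩ (Finset.univ.filter fun i : Fin n => (i : ℕ) < j ∧ v ≤ y.col i) := by
    ext i
    simp only [Finset.mem_insert, Finset.mem_filter, Finset.mem_univ, true_and]
    constructor
    · rintro ⟨hlt, hv⟩
      rcases Nat.lt_succ_iff_lt_or_eq.mp hlt with h' | h'
      · exact Or.inr ⟨h', hv⟩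
      · exact Or.inl (Fin.ext h')
    · rintro (rfl | ⟨h', hv⟩)
      · exact ⟨Nat.lt_succ_self j, h⟩
      · exact ⟨Nat.lt_succ_of_lt h', hv⟩
  rw [he, Finset.card_insert_of_notMem (by simp)]

lemma greedy_full {t : Placement lam} (ht : IsGreedy t) {j : ℕ} (hj : j < n) {v : ℕ}
    (hv : t.col ⟨j, hj⟩ < v) (_hvle : v ≤ lam.part ⟨j, hj⟩) :
    lam.part ⟨j, hj⟩ + 1 - v ≤ Fcnt t j v := by
  have hch : ∀ m : ℕ, v ≤ m → m ≤ lam.part ⟨j, hj⟩ →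
      ∃ k : Fin n, (k : ℕ) < j ∧ t.col k = m := by
    intro m h1 h2
    by_contra hcon
    push_neg at hcon
    have hcol : ∀ k : Fin n, k < (⟨j, hj⟩ : Fin n) → t.col k ≠ m := by
      intro k hk
      exact hcon k hk
    have hp := t.pos ⟨j, hj⟩
    have hm1 : 1 ≤ m := by omega
    have := ht ⟨j, hj⟩ m hm1 h2 hcol
    omega
  have hne : Nonempty (Fin n) := ⟨⟨j, hj⟩⟩
  choose! f hf1 hf2 using hch
  rw [show lam.part ⟨j, hj⟩ + 1 - v = (Finset.Icc v (lam.part ⟨j, hj⟩)).card from by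
    rw [Nat.card_Icc]]
  apply Finset.card_le_card_of_injOn f
  · intro m hm
    rw [Finset.mem_coe, Finset.mem_Icc] at hm
    rw [Finset.mem_coe, Finset.mem_filter]
    exact ⟨Finset.mem_univ _, hf1 m hm.1 hm.2, by rw [hf2 m hm.1 hm.2]; exact hm.1⟩
  · intro m1 hm1 m2 hm2 he
    rw [Finset.mem_coe, Finset.mem_Icc] at hm1 hm2
    rw [← hf2 m1 hm1.1 hm1.2, ← hf2 m2 hm2.1 hm2.2, he]

lemma Fcnt_le_Icc (x : Placement lam) {j : ℕ} (hj : j < n) (v : ℕ) :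
    Fcnt x (j + 1) v ≤ lam.part ⟨j, hj⟩ + 1 - v := by
  rw [show lam.part ⟨j, hj⟩ + 1 - v = (Finset.Icc v (lam.part ⟨j, hj⟩)).card from by
    rw [Nat.card_Icc]]
  apply Finset.card_le_card_of_injOn x.col
  · intro i hi
    simp only [Finset.mem_coe, Finset.mem_filter, Finset.mem_univ, true_and] at hi
    rw [Finset.mem_coe, Finset.mem_Icc]
    refine ⟨hi.2, (x.le_part i).trans (lam.mono ?_)⟩
    rw [Fin.le_def]
    exact Nat.lt_succ_iff.mp hi.1
  · intro a _ b _ h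
    exact x.inj h

lemma Fcnt_le {t : Placement lam} (ht : IsGreedy t) (x : Placement lam) :
    ∀ j v, Fcnt x j v ≤ Fcnt t j v := by
  intro j
  induction j with
  | zero => intro v; simp [Fcnt]
  | succ j ih =>
    intro v
    by_cases hj : j < n
    · by_cases hx : v ≤ x.col ⟨j, hj⟩
      · by_cases htc : v ≤ t.col ⟨j, hj⟩
        · rw [Fcnt_succ_of_yes x hj hx, Fcnt_succ_of_yes t hj htc]
          exact Nat.add_le_add_right (ih v) 1
        · push_neg at htc
          have h1 := Fcnt_le_Icc x hj v
          have h2 := greedy_full ht hj htc (le_trans hx (x.le_part ⟨j, hj⟩))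
          have h3 : Fcnt t j v ≤ Fcnt t (j + 1) v := Fcnt_mono_j t (Nat.le_succ j) v
          have h4 := ih v
          show Fcnt x (j + 1) v ≤ Fcnt t (j + 1) v
          omega
      · rw [Fcnt_succ_of_not x (fun hj' => by
          have : (⟨j, hj'⟩ : Fin n) = ⟨j, hj⟩ := rfl
          rw [this]; exact hx)]
        exact (ih v).trans (Fcnt_mono_j t (Nat.le_succ j) v)
    · rw [Fcnt_succ_of_not x (fun hj' => absurd hj' hj),
        Fcnt_succ_of_not t (fun hj' => absurd hj' hj)]
      exact ih v

lemma Fcnt_eq_filter (y : Placement lam) (j v : ℕ) :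
    Fcnt y j v = ((segSet y.col j).filter (v ≤ ·)).card := by
  unfold Fcnt segSet
  rw [Finset.filter_image, Finset.card_image_of_injective _ y.inj, Finset.filter_filter]

lemma sorted_dominance {S T : Finset ℕ} (hcard : S.card = T.card)
    (h : ∀ v, (S.filter (v ≤ ·)).card ≤ (T.filter (v ≤ ·)).card) :
    List.Forall₂ (· ≤ ·) (S.sort (· ≤ ·)) (T.sort (· ≤ ·)) := by
  rw [List.forall₂_iff_get]
  have hlen1 : (S.sort (· ≤ ·)).length = S.card := Finset.length_sort _
  have hlen2 : (T.sort (· ≤ ·)).length = T.card := Finset.length_sort _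
  refine ⟨by rw [hlen1, hlen2, hcard], ?_⟩
  intro k hk1 hk2
  by_contra hcon
  push_neg at hcon
  have hA : ∀ v : ℕ, (∃ m : Fin (S.sort (· ≤ ·)).length, k ≤ (m : ℕ) ∧
      v ≤ (S.sort (· ≤ ·)).get m → True) → True := fun _ _ => trivial
  clear hA
  have hA : S.card - k ≤ (S.filter ((S.sort (· ≤ ·)).get ⟨k, hk1⟩ ≤ ·)).card := by
    rw [show S.card - k = (Finset.Ico k S.card).card from by rw [Nat.card_Ico]]
    apply Finset.card_le_card_of_injOn (fun m => (S.sort (· ≤ ·)).getD m 0)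
    · intro m hm
      rw [Finset.mem_coe, Finset.mem_Ico] at hm
      have hmlen : m < (S.sort (· ≤ ·)).length := by omega
      have hgd : (S.sort (· ≤ ·)).getD m 0 = (S.sort (· ≤ ·)).get ⟨m, hmlen⟩ := by
        rw [List.getD_eq_getElem _ _ hmlen, List.get_eq_getElem]
      simp only [hgd, Finset.mem_coe, Finset.mem_filter]
      refine ⟨(Finset.mem_sort (α := ℕ) (· ≤ ·)).mp (List.get_mem _ _), ?_⟩
      exact (Finset.sortedLT_sort S).strictMono_get.monotone
        (show (⟨k, hk1⟩ : Fin (S.sort (· ≤ ·)).length) ≤ ⟨m, hmlen⟩ from hm.1)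
    · intro m1 h1 m2 h2 he
      rw [Finset.mem_coe, Finset.mem_Ico] at h1 h2
      have hm1 : m1 < (S.sort (· ≤ ·)).length := by omega
      have hm2 : m2 < (S.sort (· ≤ ·)).length := by omega
      simp only at he
      rw [List.getD_eq_getElem _ _ hm1, List.getD_eq_getElem _ _ hm2] at he
      have hgeq : (S.sort (· ≤ ·)).get ⟨m1, hm1⟩ = (S.sort (· ≤ ·)).get ⟨m2, hm2⟩ := by
        rw [List.get_eq_getElem, List.get_eq_getElem]
        exact he
      have := (Finset.sortedLT_sort S).strictMono_get.injective hgeq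
      exact congrArg Fin.val this
  have hB : (T.filter ((S.sort (· ≤ ·)).get ⟨k, hk1⟩ ≤ ·)).card ≤ T.card - (k + 1) := by
    rw [show T.card - (k + 1) = (Finset.Ico (k + 1) T.card).card from by rw [Nat.card_Ico]]
    apply Finset.card_le_card_of_injOn (fun a => (T.sort (· ≤ ·)).idxOf a)
    · intro a ha
      rw [Finset.mem_coe, Finset.mem_filter] at ha
      have haL : a ∈ T.sort (· ≤ ·) := (Finset.mem_sort (α := ℕ) (· ≤ ·)).mpr ha.1
      have hidx : (T.sort (· ≤ ·)).idxOf a < (T.sort (· ≤ ·)).length :=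
        List.idxOf_lt_length_iff.mpr haL
      rw [Finset.mem_coe, Finset.mem_Ico]
      beta_reduce
      refine ⟨?_, by omega⟩
      by_contra hle
      push_neg at hle
      have hget : (T.sort (· ≤ ·)).get ⟨(T.sort (· ≤ ·)).idxOf a, hidx⟩ = a :=
        List.idxOf_get hidx
      have hmono : (T.sort (· ≤ ·)).get ⟨(T.sort (· ≤ ·)).idxOf a, hidx⟩
          ≤ (T.sort (· ≤ ·)).get ⟨k, hk2⟩ :=
        (Finset.sortedLT_sort T).strictMono_get.monotone
          (show (⟨(T.sort (· ≤ ·)).idxOf a, hidx⟩ : Fin (T.sort (· ≤ ·)).length)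
              ≤ ⟨k, hk2⟩ from Nat.lt_succ_iff.mp hle)
      rw [hget] at hmono
      have hva := ha.2
      omega
    · intro a ha b hb he
      rw [Finset.mem_coe, Finset.mem_filter] at ha hb
      have haL : a ∈ T.sort (· ≤ ·) := (Finset.mem_sort (α := ℕ) (· ≤ ·)).mpr ha.1
      have hbL : b ∈ T.sort (· ≤ ·) := (Finset.mem_sort (α := ℕ) (· ≤ ·)).mpr hb.1
      have hia : (T.sort (· ≤ ·)).idxOf a < (T.sort (· ≤ ·)).length :=
        List.idxOf_lt_length_iff.mpr haL
      have hib : (T.sort (· ≤ ·)).idxOf b < (T.sort (· ≤ ·)).length :=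
        List.idxOf_lt_length_iff.mpr hbL
      simp only at he
      rw [← List.idxOf_get hia, ← List.idxOf_get hib]
      congr 1
      exact Fin.ext he
  have hfin := h ((S.sort (· ≤ ·)).get ⟨k, hk1⟩)
  omega

lemma rle_of_Fcnt {x y : Placement lam} (h : ∀ j v, Fcnt x j v ≤ Fcnt y j v) :
    rle x y := by
  have key : ∀ j, j ≤ n →
      List.Forall₂ (· ≤ ·) (initSeg x.col j) (initSeg y.col j) := by
    intro j hj
    rw [initSeg_eq, initSeg_eq]
    apply sorted_dominance
    · rw [card_segSet' x.inj hj, card_segSet' y.inj hj]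
    · intro v
      rw [← Fcnt_eq_filter, ← Fcnt_eq_filter]
      exact h j v
  intro j
  rcases le_or_gt j n with hj | hj
  · exact key j hj
  · rw [initSeg_stable x.col hj.le, initSeg_stable y.col hj.le]
    exact key n le_rfl

lemma rle_greedy {t : Placement lam} (ht : IsGreedy t) (x : Placement lam) : rle x t :=
  rle_of_Fcnt (Fcnt_le ht x)

lemma toPerm_injective (hN : lam.maxPart ≤ n + 1) :
    Function.Injective (toPerm (lam := lam) hN) := by
  intro x y h
  apply Placement.ext'
  funext i
  have hiN : (i : ℕ) < lam.maxPart := lt_of_lt_of_le i.isLt (n_le_maxPart lam)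
  have h1 := toPerm_col hN x i hiN
  have h2 := toPerm_col hN y i hiN
  rw [h] at h1
  omega

lemma le_of_forall₂_sorted_mem {S T : Finset ℕ} {B : ℕ}
    (hb : List.Forall₂ (· ≤ ·) (S.sort (· ≤ ·)) (T.sort (· ≤ ·)))
    {a : ℕ} (ha : a ∈ S) (hT : ∀ c ∈ T, c + 1 ≤ B) : a + 1 ≤ B := by
  have haL : a ∈ S.sort (· ≤ ·) := (Finset.mem_sort (α := ℕ) (· ≤ ·)).mpr ha
  obtain ⟨idx, hget⟩ := List.mem_iff_get.mp haL
  rw [List.forall₂_iff_get] at hb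
  have hlt2 : (idx : ℕ) < (T.sort (· ≤ ·)).length := by rw [← hb.1]; exact idx.isLt
  have h2 := hb.2 (idx : ℕ) idx.isLt hlt2
  have hmem : (T.sort (· ≤ ·)).get ⟨(idx : ℕ), hlt2⟩ ∈ T :=
    (Finset.mem_sort (α := ℕ) (· ≤ ·)).mp (List.get_mem _ _)
  have hc := hT _ hmem
  simp only [Fin.eta] at h2
  rw [hget] at h2
  omega

lemma exists_placement (hN : lam.maxPart ≤ n + 1) {t : Placement lam} (ht : IsGreedy t)
    (π : Equiv.Perm (Fin lam.maxPart)) (hπ : bruhatLE π (toPerm hN t)) :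
    ∃ x : Placement lam, toPerm hN x = π := by
  have hnN : n ≤ lam.maxPart := n_le_maxPart lam
  have hbound : ∀ i : Fin n,
      (π ⟨(i : ℕ), lt_of_lt_of_le i.isLt hnN⟩ : ℕ) + 1 ≤ lam.part i := by
    intro i
    have hj : (i : ℕ) + 1 ≤ n := Nat.succ_le_of_lt i.isLt
    have hb := hπ ((i : ℕ) + 1)
    have hub : ∀ c ∈ segSet (fun a : Fin lam.maxPart => ((toPerm hN t) a : ℕ))
        ((i : ℕ) + 1), c + 1 ≤ lam.part i := by
      intro c hc
      obtain ⟨a, ha, rfl⟩ := Finset.mem_image.mp hc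
      rw [Finset.mem_filter] at ha
      have han : (a : ℕ) < n := lt_of_lt_of_le ha.2 hj
      have h1 : ((toPerm hN t) a : ℕ) + 1 = t.col ⟨a, han⟩ := by
        simpa using toPerm_col hN t ⟨a, han⟩ a.isLt
      have h2 : t.col ⟨a, han⟩ ≤ lam.part i := by
        refine (t.le_part _).trans (lam.mono ?_)
        rw [Fin.le_def]
        exact Nat.lt_succ_iff.mp ha.2
      omega
    have hmem : (π ⟨(i : ℕ), lt_of_lt_of_le i.isLt hnN⟩ : ℕ)
        ∈ segSet (fun a : Fin lam.maxPart => ((π a : ℕ))) ((i : ℕ) + 1) :=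
      Finset.mem_image.mpr ⟨⟨(i : ℕ), lt_of_lt_of_le i.isLt hnN⟩,
        Finset.mem_filter.mpr ⟨Finset.mem_univ _, Nat.lt_succ_self _⟩, rfl⟩
    exact le_of_forall₂_sorted_mem hb hmem hub
  have hxinj : Function.Injective
      (fun i : Fin n => (π ⟨(i : ℕ), lt_of_lt_of_le i.isLt hnN⟩ : ℕ) + 1) := by
    intro a b hab
    simp only at hab
    have h1 : π ⟨(a : ℕ), lt_of_lt_of_le a.isLt hnN⟩
        = π ⟨(b : ℕ), lt_of_lt_of_le b.isLt hnN⟩ := Fin.ext (by omega)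
    have h2 := π.injective h1
    have h3 := congrArg (Fin.val (n := lam.maxPart)) h2
    exact Fin.ext h3
  have hxpos : ∀ i : Fin n, 1 ≤ (π ⟨(i : ℕ), lt_of_lt_of_le i.isLt hnN⟩ : ℕ) + 1 :=
    fun _ => Nat.succ_le_succ (Nat.zero_le _)
  refine ⟨⟨fun i => (π ⟨(i : ℕ), lt_of_lt_of_le i.isLt hnN⟩ : ℕ) + 1, hxinj,
    hxpos, hbound⟩, ?_⟩
  set x : Placement lam := ⟨fun i => (π ⟨(i : ℕ), lt_of_lt_of_le i.isLt hnN⟩ : ℕ) + 1,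
    hxinj, hxpos, hbound⟩ with hx
  have hagree : ∀ a : Fin lam.maxPart, (a : ℕ) < n → toPerm hN x a = π a := by
    intro a ha
    have h1 : ((toPerm hN x) a : ℕ) + 1 = x.col ⟨a, ha⟩ := by
      simpa using toPerm_col hN x ⟨a, ha⟩ a.isLt
    have h2 : x.col ⟨(a : ℕ), ha⟩ = (π a : ℕ) + 1 := rfl
    apply Fin.ext
    omega
  apply Equiv.ext
  intro a
  by_cases ha : (a : ℕ) < n
  · exact hagree a ha
  · obtain ⟨b, hb⟩ := (toPerm hN x).surjective (π a)
    have hba : b = a := by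
      by_contra hba
      have hbn : (b : ℕ) < n := by
        have hb1 := b.isLt
        have ha1 := a.isLt
        have hne : (b : ℕ) ≠ (a : ℕ) := fun hh => hba (Fin.ext hh)
        omega
      rw [hagree b hbn] at hb
      exact hba (π.injective hb)
    rw [← hb, hba]

end Aux

/-- If the last GJW entry is `0` or `1` (i.e. `λ_n ≤ n + 1`), the map
`x ↦ σ_x` is an order isomorphism from the rook poset onto the lower Bruhat interval below
`σ_{1̂}` in the symmetric group on `{1, …, λ_n}`. -/
theorem rookPoset_iso_bruhat_interval {n : ℕ} (lam : Partition n)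
    (hN : lam.maxPart ≤ n + 1) (t : Placement lam) (ht : IsGreedy t) :
    ∃ e : Placement lam → Equiv.Perm (Fin lam.maxPart),
      Function.Injective e ∧
      (∀ (x : Placement lam) (a : Fin lam.maxPart),
        ((e x) a : ℕ) + 1 = x.sigma ((a : ℕ) + 1)) ∧
      (∀ x y : Placement lam, rle x y ↔ bruhatLE (e x) (e y)) ∧
      Set.range e = {π : Equiv.Perm (Fin lam.maxPart) | bruhatLE π (e t)} := by
  refine ⟨toPerm hN, toPerm_injective hN, toPerm_apply hN,
    fun x y => rle_iff_bruhat hN x y, ?_⟩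
  ext π
  simp only [Set.mem_range, Set.mem_setOf_eq]
  constructor
  · rintro ⟨x, rfl⟩
    exact (rle_iff_bruhat hN x t).mp (rle_greedy ht x)
  · intro hπ
    exact exists_placement hN ht π hπ

end RookPoset
end

section
/- Let λ and μ be partitions with the same number n of parts such that μ_i ≤ λ_i for all i, and let y ∈ P_λ be the greedy maximal rook placement 1̂ of μ (which is also a maximal rook placement on λ). Then {x ∈ P_λ : x ≤ y} = P_μ as sets of rook placements, and the lower interval of y in P_λ, with the induced order, is order-isomorphic to the rook poset P_μ. -/
namespace RookPoset

/-- From componentwise domination, each element of the left list is below some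
element of the right list. -/
lemma forall₂_exists_le {A B : List ℕ} (h : List.Forall₂ (· ≤ ·) A B) :
    ∀ a ∈ A, ∃ b ∈ B, a ≤ b := by
  induction h with
  | nil => intro a ha; simp at ha
  | @cons a b A' B' hab h ih =>
      intro c hc
      rcases List.mem_cons.1 hc with rfl | hc
      · exact ⟨b, List.mem_cons_self, hab⟩
      · obtain ⟨d, hd, hcd⟩ := ih c hc
        exact ⟨d, List.mem_cons_of_mem _ hd, hcd⟩

lemma sorted_le_of_counts : ∀ (A B : List ℕ), A.Pairwise (· ≤ ·) → B.Pairwise (· ≤ ·) →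
    A.length = B.length →
    (∀ v : ℕ, A.countP (fun a => decide (v ≤ a)) ≤ B.countP (fun a => decide (v ≤ a))) →
    List.Forall₂ (· ≤ ·) A B
  | [], [], _, _, _, _ => List.Forall₂.nil
  | [], _ :: _, _, _, hlen, _ => by simp at hlen
  | _ :: _, [], _, _, hlen, _ => by simp at hlen
  | a :: A, b :: B, hA, hB, hlen, hcnt => by
      have hA' := List.pairwise_cons.1 hA
      have hB' := List.pairwise_cons.1 hB
      have hlen' : A.length = B.length := by simpa using hlen
      have hab : a ≤ b := by
        by_contra hab
        push_neg at hab
        have h1 := hcnt (b + 1)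
        have hAfull : (a :: A).countP (fun c => decide (b + 1 ≤ c)) = (a :: A).length := by
          rw [List.countP_eq_length]
          intro c hc
          simp only [decide_eq_true_eq]
          rcases List.mem_cons.1 hc with rfl | hc
          · exact hab
          · exact le_trans hab (hA'.1 c hc)
        have hBcnt : (b :: B).countP (fun c => decide (b + 1 ≤ c)) =
            B.countP (fun c => decide (b + 1 ≤ c)) := by
          rw [List.countP_cons_of_neg]
          simp
        rw [hAfull, hBcnt] at h1
        have := List.countP_le_length (l := B) (p := fun c => decide (b + 1 ≤ c))
        simp only [List.length_cons] at h1
        omega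
      refine List.Forall₂.cons hab (sorted_le_of_counts A B hA'.2 hB'.2 hlen' ?_)
      intro v
      rcases le_or_gt v b with hvb | hvb
      · have : B.countP (fun c => decide (v ≤ c)) = B.length := by
          rw [List.countP_eq_length]
          intro c hc
          simp only [decide_eq_true_eq]
          exact le_trans hvb (hB'.1 c hc)
        rw [this, ← hlen']
        exact List.countP_le_length
      · have hva : ¬ v ≤ a := by omega
        have h1 := hcnt v
        rw [List.countP_cons_of_neg (p := fun c => decide (v ≤ c)) (a := a) (l := A) (by simpa using hva),
            List.countP_cons_of_neg (p := fun c => decide (v ≤ c)) (a := b) (l := B) (by simp; omega)] at h1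
        exact h1

lemma countP_sort (t : Finset ℕ) (v : ℕ) :
    (t.sort (· ≤ ·)).countP (fun a => decide (v ≤ a)) = (t.filter (fun a => v ≤ a)).card := by
  rw [(Finset.sort_perm_toList t (· ≤ ·)).countP_eq]
  have h1 : Multiset.countP (fun a => v ≤ a) (↑t.toList) =
      List.countP (fun a => decide (v ≤ a)) t.toList := Multiset.coe_countP _ _
  rw [← h1, Finset.coe_toList, Multiset.countP_eq_card_filter]
  rfl



open Finset in
lemma initSeg_length {n : ℕ} (x : Fin n → ℕ) (hx : Function.Injective x) (j : ℕ) :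
    (initSeg x j).length = (univ.filter fun i : Fin n => (i : ℕ) < j).card := by
  unfold initSeg
  rw [Finset.length_sort, Finset.card_image_of_injective _ hx]

open Finset in
lemma initSeg_countP {n : ℕ} (x : Fin n → ℕ) (hx : Function.Injective x) (j v : ℕ) :
    (initSeg x j).countP (fun a => decide (v ≤ a)) =
    (univ.filter fun i : Fin n => (i : ℕ) < j ∧ v ≤ x i).card := by
  unfold initSeg
  rw [countP_sort, Finset.filter_image, Finset.card_image_of_injective _ hx,
      Finset.filter_filter]

open Finset in
lemma count_le_greedy {n : ℕ} (mu : Partition n) (x y : Fin n → ℕ)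
    (hxinj : Function.Injective x) (hyinj : Function.Injective y)
    (hxle : ∀ i, x i ≤ mu.part i)
    (hgr : ∀ (i : Fin n) (m : ℕ), y i < m → m ≤ mu.part i → ∃ k, k < i ∧ y k = m)
    (j v : ℕ) :
    (univ.filter fun i : Fin n => (i : ℕ) < j ∧ v ≤ x i).card ≤
    (univ.filter fun i : Fin n => (i : ℕ) < j ∧ v ≤ y i).card := by
  classical
  set D := univ.filter (fun i : Fin n => (i : ℕ) < j ∧ y i < v) with hD
  by_cases hDe : D = ∅
  · apply Finset.card_le_card
    intro i hi
    simp only [mem_filter, mem_univ, true_and] at hi ⊢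
    refine ⟨hi.1, ?_⟩
    by_contra h
    have hiD : i ∈ D := by
      simp only [hD, mem_filter, mem_univ, true_and]
      exact ⟨hi.1, by omega⟩
    rw [hDe] at hiD
    exact absurd hiD (Finset.notMem_empty i)
  · have hne : D.Nonempty := Finset.nonempty_of_ne_empty hDe
    set istar := D.max' hne with histar
    have histarD : istar ∈ D := D.max'_mem hne
    have histarj : (istar : ℕ) < j := (mem_filter.1 histarD).2.1
    have histary : y istar < v := (mem_filter.1 histarD).2.2
    set u := mu.part istar + 1 with hu
    have hXA : (univ.filter fun i : Fin n => (i : ℕ) < j ∧ v ≤ x i ∧ x i < u).card ≤ u - v := by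
      have h := Finset.card_le_card_of_injOn
        (s := univ.filter fun i : Fin n => (i : ℕ) < j ∧ v ≤ x i ∧ x i < u)
        (t := Finset.Ico v u) x ?_ ?_
      · simpa [Nat.card_Ico] using h
      · intro i hi
        simp only [mem_coe, mem_filter, mem_univ, true_and] at hi
        exact Finset.mem_Ico.2 ⟨hi.2.1, hi.2.2⟩
      · exact fun a _ b _ hab => hxinj hab
    have hXB : (univ.filter fun i : Fin n => (i : ℕ) < j ∧ v ≤ x i ∧ u ≤ x i).card ≤
        (univ.filter fun i : Fin n => (i : ℕ) < j ∧ u ≤ mu.part i).card := by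
      apply Finset.card_le_card
      intro i hi
      simp only [mem_filter, mem_univ, true_and] at hi ⊢
      exact ⟨hi.1, le_trans hi.2.2 (hxle i)⟩
    have hXsplit : (univ.filter fun i : Fin n => (i : ℕ) < j ∧ v ≤ x i).card ≤
        (univ.filter fun i : Fin n => (i : ℕ) < j ∧ v ≤ x i ∧ x i < u).card +
        (univ.filter fun i : Fin n => (i : ℕ) < j ∧ v ≤ x i ∧ u ≤ x i).card := by
      refine le_trans (Finset.card_le_card ?_) (Finset.card_union_le _ _)
      intro i hi
      simp only [mem_union, mem_filter, mem_univ, true_and] at hi ⊢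
      rcases lt_or_ge (x i) u with h | h
      · exact Or.inl ⟨hi.1, hi.2, h⟩
      · exact Or.inr ⟨hi.1, hi.2, h⟩
    have hR1 : u - v ≤
        (univ.filter fun i : Fin n => (i : ℕ) < j ∧ v ≤ y i ∧ mu.part i < u).card := by
      have hmap : ∀ m ∈ Finset.Ico v u, ∃ k : Fin n, k < istar ∧ y k = m := by
        intro m hm
        rw [Finset.mem_Ico] at hm
        exact hgr istar m (lt_of_lt_of_le histary hm.1) (by omega)
      set g : ℕ → Fin n :=
        fun m => if h : ∃ k : Fin n, k < istar ∧ y k = m then h.choose else istar with hgdef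
      have hgspec : ∀ m ∈ Finset.Ico v u, g m < istar ∧ y (g m) = m := by
        intro m hm
        have h := hmap m hm
        simp only [hgdef, dif_pos h]
        exact h.choose_spec
      have h := Finset.card_le_card_of_injOn (s := Finset.Ico v u)
        (t := univ.filter fun i : Fin n => (i : ℕ) < j ∧ v ≤ y i ∧ mu.part i < u) g ?_ ?_
      · simpa [Nat.card_Ico] using h
      · intro m hm
        obtain ⟨hk, hyk⟩ := hgspec m hm
        rw [Finset.mem_coe, Finset.mem_Ico] at hm
        simp only [mem_coe, mem_filter, mem_univ, true_and]
        have hkv : (g m : ℕ) < (istar : ℕ) := hk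
        refine ⟨by omega, ?_, ?_⟩
        · rw [hyk]; exact hm.1
        · have : mu.part (g m) ≤ mu.part istar := mu.mono (le_of_lt hk)
          omega
      · intro m1 h1 m2 h2 heq
        have e1 := (hgspec m1 h1).2
        have e2 := (hgspec m2 h2).2
        rw [heq] at e1
        rw [← e1, e2]
    have hR2sub : ∀ i : Fin n, (i : ℕ) < j → u ≤ mu.part i → v ≤ y i := by
      intro i hij hui
      by_contra h
      have hiD : i ∈ D := by
        simp only [hD, mem_filter, mem_univ, true_and]
        exact ⟨hij, by omega⟩
      have hle' : i ≤ istar := D.le_max' i hiD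
      have : mu.part i ≤ mu.part istar := mu.mono hle'
      omega
    have hUnion : (univ.filter fun i : Fin n => (i : ℕ) < j ∧ v ≤ y i ∧ mu.part i < u).card +
        (univ.filter fun i : Fin n => (i : ℕ) < j ∧ u ≤ mu.part i).card ≤
        (univ.filter fun i : Fin n => (i : ℕ) < j ∧ v ≤ y i).card := by
      rw [← Finset.card_union_of_disjoint ?_]
      · apply Finset.card_le_card
        intro i hi
        simp only [mem_union, mem_filter, mem_univ, true_and] at hi ⊢
        rcases hi with h | h
        · exact ⟨h.1, h.2.1⟩
        · exact ⟨h.1, hR2sub i h.1 h.2⟩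
      · rw [Finset.disjoint_left]
        intro i h1 h2
        simp only [mem_filter, mem_univ, true_and] at h1 h2
        omega
    omega

/-- If `μ_i ≤ λ_i` for all `i` and `y` is the greedy maximal rook placement
of `μ` (viewed as a placement on `λ`), then the elements of the rook poset of `λ` lying below
`y` are exactly the maximal rook placements on `μ`, and the lower interval of `y` is
order-isomorphic to the rook poset of `μ`. -/
theorem lower_interval_eq_subboard {n : ℕ} (lam mu : Partition n)
    (hle : ∀ i : Fin n, mu.part i ≤ lam.part i)
    (ymu : Placement mu) (hg : IsGreedy ymu)
    (y : Placement lam) (hy : y.col = ymu.col) :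
    (∀ x : Placement lam, rle x y ↔ ∀ i : Fin n, x.col i ≤ mu.part i) ∧
    ∃ e : {x : Placement lam // rle x y} ≃ Placement mu,
      (∀ x : {x : Placement lam // rle x y}, (e x).col = x.1.col) ∧
      ∀ a b : {x : Placement lam // rle x y}, rle a.1 b.1 ↔ rle (e a) (e b) := by
  have hgr : ∀ (i : Fin n) (m : ℕ), ymu.col i < m → m ≤ mu.part i →
      ∃ k, k < i ∧ ymu.col k = m := by
    intro i m him hmle
    by_contra h
    push_neg at h
    have h1 : ∀ k : Fin n, k < i → ymu.col k ≠ m := fun k hk => h k hk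
    have := hg i m (by have := ymu.pos i; omega) hmle h1
    omega
  have key : ∀ x : Placement lam, rle x y ↔ ∀ i : Fin n, x.col i ≤ mu.part i := by
    intro x
    constructor
    · intro hxy i
      have h := hxy ((i : ℕ) + 1)
      have hximem : x.col i ∈ initSeg x.col ((i : ℕ) + 1) := by
        unfold initSeg
        rw [Finset.mem_sort]
        exact Finset.mem_image_of_mem _ (by simp)
      obtain ⟨b, hb, hxb⟩ := forall₂_exists_le h _ hximem
      unfold initSeg at hb
      rw [Finset.mem_sort, Finset.mem_image] at hb
      obtain ⟨i', hi', rfl⟩ := hb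
      simp only [Finset.mem_filter, Finset.mem_univ, true_and] at hi'
      have hi'le : i' ≤ i := Fin.le_def.mpr (by omega)
      calc x.col i ≤ y.col i' := hxb
        _ = ymu.col i' := by rw [hy]
        _ ≤ mu.part i' := ymu.le_part i'
        _ ≤ mu.part i := mu.mono hi'le
    · intro hx j
      show List.Forall₂ (· ≤ ·) (initSeg x.col j) (initSeg y.col j)
      rw [hy]
      apply sorted_le_of_counts
      · exact Finset.pairwise_sort _ _
      · exact Finset.pairwise_sort _ _
      · rw [initSeg_length x.col x.inj, initSeg_length ymu.col ymu.inj]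
      · intro v
        rw [initSeg_countP x.col x.inj, initSeg_countP ymu.col ymu.inj]
        exact count_le_greedy mu x.col ymu.col x.inj ymu.inj hx hgr j v
  refine ⟨key, ?_⟩
  refine ⟨⟨fun x => ⟨x.1.col, x.1.inj, x.1.pos, (key x.1).1 x.2⟩,
          fun z => ⟨⟨z.col, z.inj, z.pos, fun i => le_trans (z.le_part i) (hle i)⟩,
                    (key _).2 (fun i => z.le_part i)⟩, ?_, ?_⟩, ?_, ?_⟩
  · intro x
    apply Subtype.ext
    obtain ⟨⟨c, a, b, d⟩, hx⟩ := x
    rfl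
  · intro z
    obtain ⟨c, a, b, d⟩ := z
    rfl
  · intro x
    rfl
  · intro a b
    exact Iff.rfl


end RookPoset
end
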